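/- arXiv:1912.11104 — 3 statements merged into one kernel-verified Lean document; each statement's English description precedes it below -/
import Mathlib

section
/- For every connected graph G of the rank-3 tetrahedral tensor model, the total number of faces satisfies F(G) ≤ (3/2)b(G) + 3, where b(G) is the number of bubbles. Consequently the degree ω(G) = 3 + (3/2)b(G) − F(G) is a non-negative half-integer, establishing the existence of the 1/N expansion. -/
/-!  A combinatorial model of the Feynman graphs of the rank-3 tetrahedral
(`O(N)^3`) tensor model.

A graph consists of a finite set `B` of bubbles (copies of the tetrahedron
`K_4`); each bubble has four vertices, so the vertex set is `B × Fin 4`.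
Inside every bubble the edges of colors `1,2,3` are given once and for all by
the three fixed-point-free involutions of `Fin 4` (the proper 3-edge-coloring
of `K_4`).  The color-0 propagator edges, one per vertex, are encoded by a
fixed-point-free involution `pairing` of the vertex set. -/

open Equiv

/-- The color-`c` (for `c ∈ {1,2,3}`, here `c : Fin 3`) perfect matching on the
four vertices of a tetrahedral bubble. -/
def bubblePerm : Fin 3 → Equiv.Perm (Fin 4) :=
  ![Equiv.swap 0 1 * Equiv.swap 2 3,
    Equiv.swap 0 2 * Equiv.swap 1 3,
    Equiv.swap 0 3 * Equiv.swap 1 2]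

/-- A Feynman graph of the tetrahedral tensor model: a finite set of `K_4`
bubbles together with a fixed-point-free involution of the vertex set
describing the color-0 edges. -/
structure TGraph where
  B : Type
  [fintypeB : Fintype B]
  [decB : DecidableEq B]
  pairing : Equiv.Perm (B × Fin 4)
  invol : ∀ v, pairing (pairing v) = v
  fixfree : ∀ v, pairing v ≠ v

attribute [instance] TGraph.fintypeB TGraph.decB

namespace TGraph

/-- The vertex set of a graph. -/
abbrev V (G : TGraph) : Type := G.B × Fin 4

/-- The permutation of the vertices given by the color-`c` edges inside the
bubbles. -/
def colPerm (G : TGraph) (c : Fin 3) : Equiv.Perm G.V :=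
  (Equiv.refl G.B).prodCongr (bubblePerm c)

/-- The number of bubbles of a graph. -/
def b (G : TGraph) : ℕ := Fintype.card G.B

/-- The subgroup of permutations of the vertices generated by the color-0
pairing and the color-`c` matching: its orbits are exactly the faces of
color `c` (cycles alternating colors `0` and `c`). -/
def faceGroup (G : TGraph) (c : Fin 3) : Subgroup (Equiv.Perm G.V) :=
  Subgroup.closure {G.pairing, G.colPerm c}

/-- Two vertices lie on the same face of color `c`. -/
def sameFace (G : TGraph) (c : Fin 3) (u v : G.V) : Prop :=
  u ∈ MulAction.orbit (G.faceGroup c) v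

/-- The number of faces of color `c` of the graph. -/
noncomputable def numFaces (G : TGraph) (c : Fin 3) : ℕ :=
  Nat.card (MulAction.orbitRel.Quotient (G.faceGroup c) G.V)

/-- The total number of faces of the graph. -/
noncomputable def F (G : TGraph) : ℕ := ∑ c : Fin 3, G.numFaces c

/-- The length of the face of color `c` through the vertex `v` (a face of
length `n` consists of `n` color-0 edges and `n` color-`c` edges, hence `2n`
vertices). -/
noncomputable def faceLength (G : TGraph) (c : Fin 3) (v : G.V) : ℕ :=
  Nat.card (MulAction.orbit (G.faceGroup c) v) / 2

/-- The subgroup generated by all edges of the graph. -/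
def fullGroup (G : TGraph) : Subgroup (Equiv.Perm G.V) :=
  Subgroup.closure ({G.pairing} ∪ Set.range G.colPerm)

/-- A graph is connected if any vertex can be reached from any other one along
its edges. -/
def Connected (G : TGraph) : Prop :=
  ∀ u v : G.V, u ∈ MulAction.orbit G.fullGroup v

/-- One step along an edge of the graph avoiding the color-0 edges whose
endpoints belong to `S`. -/
def stepAvoiding (G : TGraph) (S : Set G.V) (u v : G.V) : Prop :=
  (∃ c, v = G.colPerm c u) ∨ (v = G.pairing u ∧ u ∉ S ∧ v ∉ S)

/-- Reachability in the graph with the color-0 edges meeting `S` removed. -/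
def reachAvoiding (G : TGraph) (S : Set G.V) : G.V → G.V → Prop :=
  Relation.ReflTransGen (G.stepAvoiding S)

/-- The pair of color-0 edges through the vertices `u` and `w` disconnects the
graph when removed.  Together with the requirement that the two edges be
distinct, this is the notion of a 2-edge-cut of color-0 edges. -/
def CutDisconnects (G : TGraph) (u w : G.V) : Prop :=
  ¬ ∀ x y : G.V, G.reachAvoiding {u, G.pairing u, w, G.pairing w} x y

/-- Two vertices are connected by a 2-point function if they are joined by a
color-0 edge, or if their two (distinct) color-0 edges form a 2-edge-cut. -/
def TwoPoint (G : TGraph) (x y : G.V) : Prop :=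
  G.pairing x = y ∨ (y ≠ x ∧ y ≠ G.pairing x ∧ G.CutDisconnects x y)

/-- The flip of the two color-0 edges `{u, pairing u}` and `{w, pairing w}`
(assumed distinct) which reconnects `u` with `w` (and `pairing u` with
`pairing w`): the pairing is conjugated by the transposition exchanging
`pairing u` and `w`.  The other flip of this pair of edges is
`G.flip u (G.pairing w)`. -/
def flip (G : TGraph) (u w : G.V) : TGraph where
  B := G.B
  pairing := Equiv.swap (G.pairing u) w * G.pairing * Equiv.swap (G.pairing u) w
  invol := by
    intro v
    simp only [Equiv.Perm.mul_apply, Equiv.swap_apply_self, G.invol]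
  fixfree := by
    intro v h
    simp only [Equiv.Perm.mul_apply] at h
    have h' : G.pairing (Equiv.swap (G.pairing u) w v) = Equiv.swap (G.pairing u) w v := by
      have := congrArg (Equiv.swap (G.pairing u) w) h
      simpa using this
    exact G.fixfree _ h'

/-- The face of color `c` through the color-0 edge `{v, pairing v}` has
length 2 (it consists of this edge, a color-`c` edge, a second color-0 edge
and a second color-`c` edge closing the cycle). -/
def FaceLen2 (G : TGraph) (c : Fin 3) (v : G.V) : Prop :=
  G.pairing v ≠ G.colPerm c v ∧
    G.pairing (G.colPerm c (G.pairing v)) = G.colPerm c v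

/-- A proper face of length 2 of color `c` through `v`: a face of length 2
whose two color-0 edges connect two distinct bubbles. -/
def ProperFace2 (G : TGraph) (c : Fin 3) (v : G.V) : Prop :=
  G.FaceLen2 c v ∧ (G.pairing v).1 ≠ v.1

/-- A graph maximizes the number of faces if it is connected and no connected
graph with the same number of bubbles has more faces. -/
def MaximizesFaces (G : TGraph) : Prop :=
  G.Connected ∧ ∀ H : TGraph, H.Connected → H.b = G.b → H.F ≤ G.F

/-- Isomorphisms of graphs: bijections of the vertex sets commuting with the
color-0 pairing and with the colored matchings inside the bubbles. -/
structure Iso (G H : TGraph) where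
  toEquiv : G.V ≃ H.V
  map_pairing : ∀ v, toEquiv (G.pairing v) = H.pairing (toEquiv v)
  map_col : ∀ c v, toEquiv (G.colPerm c v) = H.colPerm c (toEquiv v)

/-- Two graphs are isomorphic. -/
def IsIso (G H : TGraph) : Prop := Nonempty (Iso G H)

end TGraph

open TGraph

/-- The leading-order two-bubble graph `G_2`: two tetrahedral bubbles with
corresponding vertices joined by four color-0 edges, so that all six faces
have length 2. -/
def G2 : TGraph where
  B := Fin 2
  pairing := (Equiv.swap (0 : Fin 2) 1).prodCongr (Equiv.refl (Fin 4))
  invol := by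
    rintro ⟨i, k⟩
    simp [Equiv.prodCongr_apply, Equiv.swap_apply_self]
  fixfree := by
    rintro ⟨i, k⟩ h
    have hi : Equiv.swap (0 : Fin 2) 1 i = i := congrArg Prod.fst h
    fin_cases i <;> simp_all

/-- The double tadpole `G_1^{(c)}`: one tetrahedral bubble whose two color-0
edges each join two vertices already adjacent by an edge of color `c`. -/
def G1 (c : Fin 3) : TGraph where
  B := Fin 1
  pairing := (Equiv.refl (Fin 1)).prodCongr (bubblePerm c)
  invol := by
    rintro ⟨i, k⟩
    have hk : ∀ j : Fin 4, bubblePerm c (bubblePerm c j) = j := by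
      fin_cases c <;> decide
    simp [Equiv.prodCongr_apply, hk]
  fixfree := by
    rintro ⟨i, k⟩ h
    have hk : bubblePerm c k = k := congrArg Prod.snd h
    have hne : ∀ j : Fin 4, bubblePerm c j ≠ j := by
      fin_cases c <;> decide
    exact hne k hk

namespace TGraph

variable (H K : TGraph)

/-- The image of a vertex of `H` in the glued graph. -/
def inlV (x : H.V) : (H.B ⊕ K.B) × Fin 4 := (Sum.inl x.1, x.2)

/-- The image of a vertex of `K` in the glued graph. -/
def inrV (y : K.V) : (H.B ⊕ K.B) × Fin 4 := (Sum.inr y.1, y.2)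

/-- The underlying function of the pairing of the graph obtained by gluing `H`
and `K` along the color-0 edges `{p, H.pairing p}` and `{q, K.pairing q}`:
these two edges are cut and the half-edges are reglued as `p — q` and
`H.pairing p — K.pairing q`.  The new pair of edges is a 2-edge-cut of the
resulting graph when `H` and `K` are connected. -/
def glueFun (p : H.V) (q : K.V) : (H.B ⊕ K.B) × Fin 4 → (H.B ⊕ K.B) × Fin 4 :=
  fun z =>
    match z with
    | (Sum.inl u, k) =>
        if (u, k) = p then inrV H K q
        else if (u, k) = H.pairing p then inrV H K (K.pairing q)
        else inlV H K (H.pairing (u, k))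
    | (Sum.inr u, k) =>
        if (u, k) = q then inlV H K p
        else if (u, k) = K.pairing q then inlV H K (H.pairing p)
        else inrV H K (K.pairing (u, k))

theorem glueFun_inlV (p : H.V) (q : K.V) (x : H.V) :
    glueFun H K p q (inlV H K x) =
      if x = p then inrV H K q
      else if x = H.pairing p then inrV H K (K.pairing q)
      else inlV H K (H.pairing x) := by
  cases x
  rfl

theorem glueFun_inrV (p : H.V) (q : K.V) (y : K.V) :
    glueFun H K p q (inrV H K y) =
      if y = q then inlV H K p
      else if y = K.pairing q then inlV H K (H.pairing p)
      else inrV H K (K.pairing y) := by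
  cases y
  rfl

theorem inlV_injective : Function.Injective (inlV H K) := by
  rintro ⟨u, k⟩ ⟨u', k'⟩ h
  have h1 : (Sum.inl u : H.B ⊕ K.B) = Sum.inl u' := congrArg Prod.fst h
  have h2 : k = k' := congrArg Prod.snd h
  exact Prod.ext (Sum.inl_injective h1) h2

theorem inrV_injective : Function.Injective (inrV H K) := by
  rintro ⟨u, k⟩ ⟨u', k'⟩ h
  have h1 : (Sum.inr u : H.B ⊕ K.B) = Sum.inr u' := congrArg Prod.fst h
  have h2 : k = k' := congrArg Prod.snd h
  exact Prod.ext (Sum.inr_injective h1) h2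

theorem inlV_ne_inrV (x : H.V) (y : K.V) : inlV H K x ≠ inrV H K y := by
  intro h
  exact Sum.inl_ne_inr (congrArg Prod.fst h)

theorem glueFun_invol_inl (p : H.V) (q : K.V) (x : H.V) :
    glueFun H K p q (glueFun H K p q (inlV H K x)) = inlV H K x := by
  rw [glueFun_inlV]
  by_cases h1 : x = p
  · rw [if_pos h1, glueFun_inrV, if_pos rfl, h1]
  · by_cases h2 : x = H.pairing p
    · rw [if_neg h1, if_pos h2, glueFun_inrV,
        if_neg (fun h => K.fixfree q h), if_pos rfl, h2]
    · have hne1 : H.pairing x ≠ p := by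
        intro h; apply h2
        have := congrArg H.pairing h
        rw [H.invol] at this; exact this
      have hne2 : H.pairing x ≠ H.pairing p := fun h => h1 (H.pairing.injective h)
      rw [if_neg h1, if_neg h2, glueFun_inlV, if_neg hne1, if_neg hne2, H.invol]

theorem glueFun_invol_inr (p : H.V) (q : K.V) (y : K.V) :
    glueFun H K p q (glueFun H K p q (inrV H K y)) = inrV H K y := by
  rw [glueFun_inrV]
  by_cases h1 : y = q
  · rw [if_pos h1, glueFun_inlV, if_pos rfl, h1]
  · by_cases h2 : y = K.pairing q
    · rw [if_neg h1, if_pos h2, glueFun_inlV,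
        if_neg (fun h => H.fixfree p h), if_pos rfl, h2]
    · have hne1 : K.pairing y ≠ q := by
        intro h; apply h2
        have := congrArg K.pairing h
        rw [K.invol] at this; exact this
      have hne2 : K.pairing y ≠ K.pairing q := fun h => h1 (K.pairing.injective h)
      rw [if_neg h1, if_neg h2, glueFun_inrV, if_neg hne1, if_neg hne2, K.invol]

theorem glueFun_involutive (p : H.V) (q : K.V) :
    Function.Involutive (glueFun H K p q) := by
  rintro ⟨(u | u), k⟩
  · exact glueFun_invol_inl H K p q (u, k)
  · exact glueFun_invol_inr H K p q (u, k)

theorem glueFun_fixfree (p : H.V) (q : K.V) :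
    ∀ z, glueFun H K p q z ≠ z := by
  have hl : ∀ x : H.V, glueFun H K p q (inlV H K x) ≠ inlV H K x := by
    intro x h
    rw [glueFun_inlV] at h
    by_cases h1 : x = p
    · rw [if_pos h1] at h
      exact inlV_ne_inrV H K x q h.symm
    · by_cases h2 : x = H.pairing p
      · rw [if_neg h1, if_pos h2] at h
        exact inlV_ne_inrV H K x (K.pairing q) h.symm
      · rw [if_neg h1, if_neg h2] at h
        exact H.fixfree x (inlV_injective H K h)
  have hr : ∀ y : K.V, glueFun H K p q (inrV H K y) ≠ inrV H K y := by
    intro y h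
    rw [glueFun_inrV] at h
    by_cases h1 : y = q
    · rw [if_pos h1] at h
      exact inlV_ne_inrV H K p y h
    · by_cases h2 : y = K.pairing q
      · rw [if_neg h1, if_pos h2] at h
        exact inlV_ne_inrV H K (H.pairing p) y h
      · rw [if_neg h1, if_neg h2] at h
        exact K.fixfree y (inrV_injective H K h)
  rintro ⟨(u | u), k⟩
  · exact hl (u, k)
  · exact hr (u, k)

/-- Gluing two graphs along a pair of color-0 edges.  When `H` and `K` are
connected, the two new color-0 edges form a 2-edge-cut of the glued graph, and
conversely every connected graph with a color-0 2-edge-cut arises this way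
from the two closed graphs obtained by cutting the two edges and closing each
side. -/
def glue (p : H.V) (q : K.V) : TGraph where
  B := H.B ⊕ K.B
  pairing := (glueFun_involutive H K p q).toPerm
  invol := fun v => glueFun_involutive H K p q v
  fixfree := fun v => glueFun_fixfree H K p q v

/-- Insertion of a melonic dipole (the 2-point graph obtained by cutting one
color-0 edge of `G_2`) on the color-0 edge `{v, G.pairing v}` of `G`. -/
def insertDipole (G : TGraph) (v : G.V) : TGraph :=
  glue G G2 v ((0 : Fin 2), (0 : Fin 4))

end TGraph

open TGraph

/-- Melonic graphs (up to isomorphism): `G_2` is melonic, and inserting a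
melonic dipole on any color-0 edge of a melonic graph yields a melonic
graph. -/
inductive IsMelonic : TGraph → Prop
  | base {G : TGraph} (h : IsIso G G2) : IsMelonic G
  | insert {G : TGraph} (hG : IsMelonic G) (v : G.V) {H : TGraph}
      (h : IsIso H (G.insertDipole v)) : IsMelonic H

/-- Double tadpoles decorated with melonic 2-point functions (up to
isomorphism): these are exactly the graphs obtained from one of the double
tadpoles `G_1^{(c)}` by repeatedly inserting melonic dipoles on color-0 edges,
i.e. double tadpoles whose two color-0 edges are replaced by melonic 2-point
functions. -/
inductive IsDecoratedTadpole : TGraph → Prop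
  | base {G : TGraph} (c : Fin 3) (h : IsIso G (G1 c)) : IsDecoratedTadpole G
  | insert {G : TGraph} (hG : IsDecoratedTadpole G) (v : G.V) {H : TGraph}
      (h : IsIso H (G.insertDipole v)) : IsDecoratedTadpole H


namespace TGraph

open Equiv MulAction Function


variable {D : Type*} [Fintype D] [DecidableEq D]

theorem _root_.Equiv.Perm.apply_inv_self {α : Type*} (f : Perm α) (x : α) : f (f⁻¹ x) = x :=
  f.apply_symm_apply x

abbrev SG (S : Set (Perm D)) : Subgroup (Perm D) := Subgroup.closure S

abbrev OQ (S : Set (Perm D)) : Type _ := MulAction.orbitRel.Quotient (SG S) D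

noncomputable def oc (S : Set (Perm D)) : ℕ := Nat.card (OQ S)

noncomputable def cyc (f : Perm D) : ℕ := oc {f}

def qmk (S : Set (Perm D)) (z : D) : OQ S := Quotient.mk'' z

lemma qmk_surjective (S : Set (Perm D)) : Surjective (qmk S) := by
  intro q
  induction q using Quotient.inductionOn'
  exact ⟨_, rfl⟩

lemma qmk_eq_iff {S : Set (Perm D)} {z w : D} :
    qmk S z = qmk S w ↔ ∃ g ∈ SG S, g w = z := by
  rw [qmk, qmk, Quotient.eq'']
  constructor
  · intro h
    obtain ⟨⟨g, hg⟩, hgw⟩ := MulAction.mem_orbit_iff.1 (MulAction.orbitRel_apply.1 h)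
    exact ⟨g, hg, hgw⟩
  · rintro ⟨g, hg, rfl⟩
    exact MulAction.orbitRel_apply.2 (MulAction.mem_orbit_iff.2 ⟨⟨g, hg⟩, rfl⟩)

lemma qmk_apply_eq {S : Set (Perm D)} {f : Perm D} (hf : f ∈ S) (z : D) :
    qmk S (f z) = qmk S z :=
  qmk_eq_iff.2 ⟨f, Subgroup.subset_closure hf, rfl⟩

lemma qmk_stable {S : Set (Perm D)} {g : Perm D} (hg : g ∈ SG S) :
    ∀ z, qmk S (g z) = qmk S z := by
  induction hg using Subgroup.closure_induction with
  | mem f hf => exact qmk_apply_eq hf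
  | one => intro z; rfl
  | mul f g' hf hg' ihf ihg' =>
      intro z
      have : (f * g') z = f (g' z) := rfl
      rw [this, ihf, ihg']
  | inv f hf ih =>
      intro z
      have := ih (f⁻¹ z)
      rw [Equiv.Perm.apply_inv_self] at this
      exact this.symm

lemma qmk_stable' {S T : Set (Perm D)}
    (h : ∀ f ∈ S, ∀ z : D, qmk T (f z) = qmk T z) {g : Perm D} (hg : g ∈ SG S) :
    ∀ z, qmk T (g z) = qmk T z := by
  induction hg using Subgroup.closure_induction with
  | mem f hf => exact h f hf
  | one => intro z; rfl
  | mul f g' hf hg' ihf ihg' =>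
      intro z
      have : (f * g') z = f (g' z) := rfl
      rw [this, ihf, ihg']
  | inv f hf ih =>
      intro z
      have := ih (f⁻¹ z)
      rw [Equiv.Perm.apply_inv_self] at this
      exact this.symm

/-- Descend between orbit quotients: if every generator of `S` preserves
`T`-classes then there are at least as many `S`-orbits as `T`-orbits. -/
lemma oc_le_oc {S T : Set (Perm D)}
    (h : ∀ f ∈ S, ∀ z : D, qmk T (f z) = qmk T z) : oc T ≤ oc S := by
  have hST : ∀ {z w : D}, qmk S z = qmk S w → qmk T z = qmk T w := by
    intro z w hzw
    obtain ⟨g, hg, rfl⟩ := qmk_eq_iff.1 hzw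
    exact qmk_stable' h hg w
  obtain ⟨F, hF⟩ : ∃ F : OQ S → OQ T, ∀ z, F (qmk S z) = qmk T z := by
    refine ⟨fun q => qmk T (Quotient.out q), fun z => ?_⟩
    exact hST (by rw [qmk]; exact Quotient.out_eq _)
  have hFs : Surjective F := by
    intro q
    obtain ⟨z, rfl⟩ := qmk_surjective T q
    exact ⟨qmk S z, hF z⟩
  exact Nat.card_le_card_of_surjective F hFs

lemma oc_le_card (S : Set (Perm D)) : oc S ≤ Nat.card D :=
  Nat.card_le_card_of_surjective _ (qmk_surjective S)

/-! ### Adding a transposition to the generating set -/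

lemma exists_descend {S T : Set (Perm D)}
    (h : ∀ {z w : D}, qmk S z = qmk S w → qmk T z = qmk T w) :
    ∃ F : OQ S → OQ T, ∀ z, F (qmk S z) = qmk T z := by
  refine ⟨fun q => qmk T (Quotient.out q), fun z => ?_⟩
  exact h (by rw [qmk]; exact Quotient.out_eq _)

lemma swap_closure_classes {S : Set (Perm D)} {u v : D} {g : Perm D}
    (hg : g ∈ SG (insert (Equiv.swap u v) S)) :
    ∀ z, qmk S (g z) = qmk S z ∨
      ((qmk S (g z) = qmk S u ∨ qmk S (g z) = qmk S v) ∧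
        (qmk S z = qmk S u ∨ qmk S z = qmk S v)) := by
  induction hg using Subgroup.closure_induction with
  | mem f hf =>
      intro z
      rcases hf with rfl | hf
      · by_cases hz : z = u
        · subst hz; rw [Equiv.swap_apply_left]; right; exact ⟨Or.inr rfl, Or.inl rfl⟩
        · by_cases hz' : z = v
          · subst hz'; rw [Equiv.swap_apply_right]; right; exact ⟨Or.inl rfl, Or.inr rfl⟩
          · rw [Equiv.swap_apply_of_ne_of_ne hz hz']; left; rfl
      · left; exact qmk_apply_eq hf z
  | one => intro z; left; rfl
  | mul f g' hf hg' ihf ihg' =>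
      intro z
      have hz : (f * g') z = f (g' z) := rfl
      rw [hz]
      rcases ihg' z with h1 | ⟨h1, h2⟩
      · rcases ihf (g' z) with h3 | ⟨h3, h4⟩
        · left; rw [h3, h1]
        · right; rw [h1] at h4; exact ⟨h3, h4⟩
      · rcases ihf (g' z) with h3 | ⟨h3, h4⟩
        · right; rw [h3]; exact ⟨h1, h2⟩
        · right; exact ⟨h3, h2⟩
  | inv f hf ih =>
      intro z
      rcases ih (f⁻¹ z) with h1 | ⟨h1, h2⟩
      · left; rw [Equiv.Perm.apply_inv_self] at h1; exact h1.symm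
      · right; rw [Equiv.Perm.apply_inv_self] at h1; exact ⟨h2, h1⟩

section InsertSwap

variable {S : Set (Perm D)} {u v : D}

lemma descend_insert :
    ∃ F : OQ S → OQ (insert (Equiv.swap u v) S),
      ∀ z, F (qmk S z) = qmk (insert (Equiv.swap u v) S) z := by
  apply exists_descend
  intro z w hzw
  obtain ⟨g, hg, rfl⟩ := qmk_eq_iff.1 hzw
  exact qmk_eq_iff.2 ⟨g, Subgroup.closure_mono (Set.subset_insert _ _) hg, rfl⟩

lemma qmk_insert_swap_uv :
    qmk (insert (Equiv.swap u v) S) u = qmk (insert (Equiv.swap u v) S) v := by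
  have := qmk_apply_eq (S := insert (Equiv.swap u v) S) (Set.mem_insert _ _) v
  rwa [Equiv.swap_apply_right] at this

lemma qmk_mono {z w : D} (h : qmk S z = qmk S w) :
    qmk (insert (Equiv.swap u v) S) z = qmk (insert (Equiv.swap u v) S) w := by
  obtain ⟨g, hg, rfl⟩ := qmk_eq_iff.1 h
  exact qmk_eq_iff.2 ⟨g, Subgroup.closure_mono (Set.subset_insert _ _) hg, rfl⟩

lemma oc_insert_swap_of_rel (h : qmk S u = qmk S v) :
    oc (insert (Equiv.swap u v) S) = oc S := by
  obtain ⟨F, hF⟩ := descend_insert (S := S) (u := u) (v := v)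
  have hsurj : Surjective F := fun q => by
    obtain ⟨z, rfl⟩ := qmk_surjective _ q; exact ⟨qmk S z, hF z⟩
  have hinj : Injective F := by
    intro q1 q2 hq
    obtain ⟨z, rfl⟩ := qmk_surjective S q1
    obtain ⟨w, rfl⟩ := qmk_surjective S q2
    rw [hF, hF] at hq
    obtain ⟨g, hg, rfl⟩ := qmk_eq_iff.1 hq
    rcases swap_closure_classes hg w with h1 | ⟨h1, h2⟩
    · exact h1
    · rw [h] at h1 h2
      rcases h1 with h1 | h1 <;> rcases h2 with h2 | h2 <;> rw [h1, h2]
  exact (Nat.card_eq_of_bijective F ⟨hinj, hsurj⟩).symm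

lemma oc_insert_swap_of_not_rel (h : qmk S u ≠ qmk S v) :
    oc (insert (Equiv.swap u v) S) + 1 = oc S := by
  classical
  obtain ⟨F, hF⟩ := descend_insert (S := S) (u := u) (v := v)
  have hbij : Bijective (fun q : {q : OQ S // q ≠ qmk S v} => F q.1) := by
    constructor
    · rintro ⟨q1, hq1⟩ ⟨q2, hq2⟩ hq
      apply Subtype.ext
      simp only at hq ⊢
      obtain ⟨z, hz⟩ := qmk_surjective S q1
      obtain ⟨w, hw⟩ := qmk_surjective S q2
      subst hz; subst hw
      rw [hF, hF] at hq
      obtain ⟨g, hg, rfl⟩ := qmk_eq_iff.1 hq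
      rcases swap_closure_classes hg w with h1 | ⟨h1, h2⟩
      · exact h1
      · have h1' : qmk S (g w) = qmk S u := by
          rcases h1 with h1 | h1
          · exact h1
          · exact absurd h1 hq1
        have h2' : qmk S w = qmk S u := by
          rcases h2 with h2 | h2
          · exact h2
          · exact absurd h2 hq2
        rw [h1', h2']
    · intro k
      obtain ⟨z, rfl⟩ := qmk_surjective _ k
      by_cases hz : qmk S z = qmk S v
      · refine ⟨⟨qmk S u, h⟩, ?_⟩
        simp only [hF]
        rw [qmk_insert_swap_uv]
        exact (qmk_mono hz).symm
      · exact ⟨⟨qmk S z, hz⟩, hF z⟩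
  have h1 : Nat.card {q : OQ S // ¬ q = qmk S v} = oc (insert (Equiv.swap u v) S) :=
    Nat.card_eq_of_bijective _ hbij
  haveI : Unique {q : OQ S // q = qmk S v} := by
    refine ⟨⟨⟨qmk S v, rfl⟩⟩, ?_⟩
    rintro ⟨q, rfl⟩
    rfl
  have h2 : Nat.card {q : OQ S // q = qmk S v} = 1 := Nat.card_unique
  have h3 : Nat.card ({q : OQ S // q = qmk S v} ⊕ {q : OQ S // ¬ q = qmk S v})
      = Nat.card (OQ S) := Nat.card_congr (Equiv.sumCompl _)
  rw [Nat.card_sum, h2] at h3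
  unfold oc
  unfold oc at h1
  omega

end InsertSwap

/-! ### Cycles of a single permutation -/

lemma qmk_single_eq_iff {f : Perm D} {z w : D} :
    qmk {f} z = qmk {f} w ↔ f.SameCycle w z := by
  rw [qmk_eq_iff]
  constructor
  · rintro ⟨g, hg, rfl⟩
    have hg' : g ∈ Subgroup.zpowers f := by
      rw [Subgroup.zpowers_eq_closure]; exact hg
    obtain ⟨k, rfl⟩ := Subgroup.mem_zpowers_iff.1 hg'
    exact ⟨k, rfl⟩
  · rintro ⟨k, rfl⟩
    exact ⟨f ^ k, zpow_mem (Subgroup.subset_closure (Set.mem_singleton f)) k, rfl⟩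

lemma oc_congr {S T : Set (Perm D)} (h : SG S = SG T) : oc S = oc T := by
  apply le_antisymm
  · exact oc_le_oc fun f hf z => qmk_stable (h ▸ Subgroup.subset_closure hf : f ∈ SG S) z
  · exact oc_le_oc fun f hf z => qmk_stable (h ▸ Subgroup.subset_closure hf : f ∈ SG T) z

lemma sameCycle_swap_mul {f : Perm D} {u v : D}
    (h : ¬ f.SameCycle u v) : (Equiv.swap u v * f).SameCycle u v := by
  set g := Equiv.swap u v * f with hg
  have gapp : ∀ z, g z = Equiv.swap u v (f z) := fun z => rfl
  have key : ∀ k : ℕ, g.SameCycle u ((f ^ k) u) := by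
    intro k
    induction k with
    | zero => simpa using Equiv.Perm.SameCycle.refl g u
    | succ n ih =>
        by_cases h1 : (f ^ (n + 1)) u = u
        · rw [h1]
        · by_cases h2 : (f ^ (n + 1)) u = v
          · exact absurd ⟨((n + 1 : ℕ) : ℤ), by rw [zpow_natCast]; exact h2⟩ h
          · have hfs : f ((f ^ n) u) = (f ^ (n + 1)) u := by
              rw [pow_succ']; rfl
            have step : g ((f ^ n) u) = (f ^ (n + 1)) u := by
              rw [gapp, hfs, Equiv.swap_apply_of_ne_of_ne h1 h2]
            exact ih.trans ⟨1, by rw [zpow_one]; exact step⟩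
  have ho : 0 < orderOf f := orderOf_pos f
  have h1 : f ^ (orderOf f - 1) = f⁻¹ := by
    apply eq_inv_of_mul_eq_one_left
    rw [← pow_succ, Nat.sub_add_cancel ho, pow_orderOf_eq_one]
  have h2 : g (f⁻¹ u) = v := by
    rw [gapp, Equiv.Perm.apply_inv_self, Equiv.swap_apply_left]
  have h3 := key (orderOf f - 1)
  rw [h1] at h3
  exact h3.trans ⟨1, by rw [zpow_one]; exact h2⟩

lemma not_sameCycle_swap_mul {f : Perm D} {u v : D} (huv : u ≠ v)
    (h : f.SameCycle u v) : ¬ (Equiv.swap u v * f).SameCycle u v := by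
  classical
  set g := Equiv.swap u v * f with hg
  have gapp : ∀ z, g z = Equiv.swap u v (f z) := fun z => rfl
  have hex : ∃ m : ℕ, 0 < m ∧ (f ^ m) u = v := by
    obtain ⟨i, hio, hi⟩ := h.exists_pow_eq'
    rcases Nat.eq_zero_or_pos i with rfl | hipos
    · exact absurd hi huv
    · exact ⟨i, hipos, hi⟩
  set m := Nat.find hex with hm
  obtain ⟨hmpos, hmv⟩ : 0 < m ∧ (f ^ m) u = v := Nat.find_spec hex
  have hmin : ∀ j, 0 < j → (f ^ j) u = v → m ≤ j := fun j hj hjv => Nat.find_min' hex ⟨hj, hjv⟩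
  have noret : ∀ p, 0 < p → p ≤ m → (f ^ p) u ≠ u := by
    intro p hp hpm hpu
    have hq : ∀ q : ℕ, ((f ^ p) ^ q) u = u := by
      intro q
      induction q with
      | zero => rfl
      | succ n ih => rw [pow_succ, Equiv.Perm.mul_apply, hpu, ih]
    have hr : (f ^ (m % p)) u = v := by
      have h5 : (f ^ (m % p + p * (m / p))) u = v := by
        rw [Nat.mod_add_div]; exact hmv
      rw [pow_add, Equiv.Perm.mul_apply, pow_mul, hq] at h5
      exact h5
    rcases Nat.eq_zero_or_pos (m % p) with h0 | hpos
    · rw [h0] at hr; exact huv hr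
    · have := hmin _ hpos hr
      have hlt : m % p < p := Nat.mod_lt _ hp
      omega
  set S : Set D := {z | ∃ j, j < m ∧ (f ^ j) u = z} with hS
  have hu : u ∈ S := ⟨0, hmpos, rfl⟩
  have hv : v ∉ S := by
    rintro ⟨j, hjm, hjv⟩
    rcases Nat.eq_zero_or_pos j with rfl | hjpos
    · exact huv hjv
    · exact absurd (hmin j hjpos hjv) (by omega)
  have hinv : ∀ z ∈ S, g z ∈ S := by
    rintro z ⟨j, hjm, rfl⟩
    have hfs : f ((f ^ j) u) = (f ^ (j + 1)) u := by rw [pow_succ']; rfl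
    by_cases h1 : (f ^ (j + 1)) u = u
    · exact absurd h1 (noret (j + 1) (by omega) (by omega))
    · by_cases h2 : (f ^ (j + 1)) u = v
      · have : g ((f ^ j) u) = u := by
          rw [gapp, hfs, h2, Equiv.swap_apply_right]
        rw [this]; exact hu
      · have hjm' : j + 1 < m := by
          rcases Nat.lt_or_ge (j + 1) m with hlt | hge
          · exact hlt
          · exfalso; have : j + 1 = m := by omega
            rw [this] at h2; exact h2 hmv
        have : g ((f ^ j) u) = (f ^ (j + 1)) u := by
          rw [gapp, hfs, Equiv.swap_apply_of_ne_of_ne h1 h2]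
        rw [this]; exact ⟨j + 1, hjm', rfl⟩
  have hiter : ∀ k : ℕ, ((g ^ k)) u ∈ S := by
    intro k
    induction k with
    | zero => exact hu
    | succ n ih =>
        have : (g ^ (n + 1)) u = g ((g ^ n) u) := by rw [pow_succ']; rfl
        rw [this]; exact hinv _ ih
  intro hsc
  obtain ⟨i, _, hi⟩ := hsc.exists_pow_eq'
  exact hv (hi ▸ hiter i)

lemma closure_insert_swap_mul (t : Perm D) (ht : t * t = 1) (S : Set (Perm D)) (f : Perm D) :
    SG (insert t (insert f S)) = SG (insert t (insert (t * f) S)) := by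
  have hf : f = t * (t * f) := by rw [← mul_assoc, ht, one_mul]
  apply le_antisymm
  · rw [Subgroup.closure_le]
    intro g hg
    simp only [Set.mem_insert_iff] at hg
    have h1 : t ∈ SG (insert t (insert (t * f) S)) :=
      Subgroup.subset_closure (Set.mem_insert _ _)
    have h2 : t * f ∈ SG (insert t (insert (t * f) S)) :=
      Subgroup.subset_closure (Set.mem_insert_of_mem _ (Set.mem_insert _ _))
    rcases hg with rfl | rfl | hg
    · exact h1
    · have h3 := Subgroup.mul_mem _ h1 h2
      rwa [← hf] at h3
    · exact Subgroup.subset_closure (Set.mem_insert_of_mem _ (Set.mem_insert_of_mem _ hg))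
  · rw [Subgroup.closure_le]
    intro g hg
    simp only [Set.mem_insert_iff] at hg
    have h1 : t ∈ SG (insert t (insert f S)) :=
      Subgroup.subset_closure (Set.mem_insert _ _)
    have h2 : f ∈ SG (insert t (insert f S)) :=
      Subgroup.subset_closure (Set.mem_insert_of_mem _ (Set.mem_insert _ _))
    rcases hg with rfl | rfl | hg
    · exact h1
    · exact Subgroup.mul_mem _ h1 h2
    · exact Subgroup.subset_closure (Set.mem_insert_of_mem _ (Set.mem_insert_of_mem _ hg))

lemma cyc_swap_mul_of_sameCycle {f : Perm D} {u v : D} (huv : u ≠ v)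
    (h : f.SameCycle u v) : cyc (Equiv.swap u v * f) = cyc f + 1 := by
  have e1 : oc (insert (Equiv.swap u v) {f}) = cyc f :=
    oc_insert_swap_of_rel (qmk_single_eq_iff.2 h.symm)
  have hns := not_sameCycle_swap_mul huv h
  have e2 : oc (insert (Equiv.swap u v) {Equiv.swap u v * f}) + 1 = cyc (Equiv.swap u v * f) :=
    oc_insert_swap_of_not_rel (fun hc => hns (qmk_single_eq_iff.1 hc).symm)
  have e3 : SG (insert (Equiv.swap u v) {f})
      = SG (insert (Equiv.swap u v) {Equiv.swap u v * f}) := by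
    have := closure_insert_swap_mul (Equiv.swap u v) (Equiv.swap_mul_self u v) (∅ : Set (Perm D)) f
    simpa using this
  rw [← oc_congr e3, e1] at e2
  omega

lemma cyc_swap_mul_of_not_sameCycle {f : Perm D} {u v : D} (huv : u ≠ v)
    (h : ¬ f.SameCycle u v) : cyc (Equiv.swap u v * f) + 1 = cyc f := by
  have h2 := sameCycle_swap_mul (f := f) (u := u) (v := v) h
  have h3 := cyc_swap_mul_of_sameCycle huv h2
  rw [← mul_assoc, Equiv.swap_mul_self, one_mul] at h3
  omega

lemma cyc_one : cyc (1 : Perm D) = Nat.card D := by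
  have hinj : Injective (qmk ({1} : Set (Perm D))) := by
    intro z w hzw
    obtain ⟨g, hg, rfl⟩ := qmk_eq_iff.1 hzw
    have hb : SG ({1} : Set (Perm D)) = ⊥ := Subgroup.closure_singleton_one
    rw [hb] at hg
    rw [Subgroup.mem_bot.1 hg]
    rfl
  exact (Nat.card_eq_of_bijective _ ⟨hinj, qmk_surjective _⟩).symm

lemma oc_pair_one (σ : Perm D) : oc {σ, (1 : Perm D)} = cyc σ := by
  apply oc_congr
  apply le_antisymm <;> rw [Subgroup.closure_le] <;> intro g hg <;>
    simp only [Set.mem_insert_iff, Set.mem_singleton_iff] at hg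
  · rcases hg with rfl | rfl
    · exact Subgroup.subset_closure (Set.mem_singleton _)
    · exact one_mem _
  · rcases hg with rfl
    exact Subgroup.subset_closure (Set.mem_insert _ _)

lemma oc_insert_swap_le (S : Set (Perm D)) (u v : D) :
    oc (insert (Equiv.swap u v) S) ≤ oc S := by
  by_cases h : qmk S u = qmk S v
  · exact le_of_eq (oc_insert_swap_of_rel h)
  · have := oc_insert_swap_of_not_rel h
    omega

lemma oc_le_insert_swap_succ (S : Set (Perm D)) (u v : D) :
    oc S ≤ oc (insert (Equiv.swap u v) S) + 1 := by
  by_cases h : qmk S u = qmk S v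
  · rw [oc_insert_swap_of_rel h]
    omega
  · exact le_of_eq (oc_insert_swap_of_not_rel h).symm

/-- The Euler-characteristic inequality for a pair of permutations. -/
lemma euler_bound (σ α : Perm D) :
    cyc σ + cyc α + cyc (σ * α) ≤ Nat.card D + 2 * oc {σ, α} := by
  suffices H : ∀ n : ℕ, ∀ α : Perm D, Nat.card D - cyc α ≤ n →
      cyc σ + cyc α + cyc (σ * α) ≤ Nat.card D + 2 * oc {σ, α} from H _ α le_rfl
  intro n
  induction n with
  | zero =>
      intro α hα
      by_cases h1 : α = 1
      · subst h1
        rw [mul_one, cyc_one, oc_pair_one]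
        omega
      · exfalso
        obtain ⟨x, hx⟩ : ∃ x, α x ≠ x := by
          by_contra hc
          push_neg at hc
          exact h1 (Equiv.ext hc)
        have hxy : x ≠ α x := fun hh => hx hh.symm
        have h2 : cyc (Equiv.swap x (α x) * α) = cyc α + 1 :=
          cyc_swap_mul_of_sameCycle hxy ⟨1, by rw [zpow_one]⟩
        have h3 : cyc (Equiv.swap x (α x) * α) ≤ Nat.card D := oc_le_card _
        omega
  | succ n ih =>
      intro α hα
      by_cases h1 : α = 1
      · subst h1
        rw [mul_one, cyc_one, oc_pair_one]
        omega
      obtain ⟨x, hx⟩ : ∃ x, α x ≠ x := by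
        by_contra hc
        push_neg at hc
        exact h1 (Equiv.ext hc)
      have hxy : x ≠ α x := fun hh => hx hh.symm
      set t := Equiv.swap x (α x) with hts
      set α' := t * α with hα'
      have htα : t * α' = α := by
        rw [hα', ← mul_assoc, Equiv.swap_mul_self, one_mul]
      have h2 : cyc α' = cyc α + 1 := cyc_swap_mul_of_sameCycle hxy ⟨1, by rw [zpow_one]⟩
      have hcard : cyc α' ≤ Nat.card D := oc_le_card _
      have hmeas : Nat.card D - cyc α' ≤ n := by omega
      have IH := ih α' hmeas
      have hσxy : σ x ≠ σ (α x) := fun hh => hxy (σ.injective hh)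
      have hrw : σ * α = Equiv.swap (σ x) (σ (α x)) * (σ * α') := by
        rw [← mul_assoc, ← Equiv.mul_swap_eq_swap_mul, mul_assoc, htα]
      by_cases hsc : (σ * α').SameCycle (σ x) (σ (α x))
      · have h3 : cyc (σ * α) = cyc (σ * α') + 1 := by
          rw [hrw]
          exact cyc_swap_mul_of_sameCycle hσxy hsc
        have h4 : oc {σ, α'} ≤ oc {σ, α} := by
          apply oc_le_oc
          intro f hf z
          simp only [Set.mem_insert_iff, Set.mem_singleton_iff] at hf
          rcases hf with rfl | hf
          · exact qmk_apply_eq (Set.mem_insert _ _) z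
          · rw [hf]
            have hq1 : qmk {σ, α'} (σ (α x)) = qmk {σ, α'} (σ x) := by
              obtain ⟨k, hk⟩ := hsc
              refine qmk_eq_iff.2 ⟨(σ * α') ^ k, ?_, hk⟩
              refine zpow_mem (Subgroup.mul_mem _ ?_ ?_) k <;> apply Subgroup.subset_closure
              · exact Set.mem_insert _ _
              · exact Set.mem_insert_of_mem _ (Set.mem_singleton _)
            have hq2 : qmk {σ, α'} x = qmk {σ, α'} (α x) := by
              have e1 : qmk {σ, α'} (σ x) = qmk {σ, α'} x :=
                qmk_apply_eq (Set.mem_insert _ _) x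
              have e2 : qmk {σ, α'} (σ (α x)) = qmk {σ, α'} (α x) :=
                qmk_apply_eq (Set.mem_insert _ _) (α x)
              rw [← e1, ← e2, hq1]
            have hαz : α z = t (α' z) := by rw [← htα]; rfl
            have hα'z : qmk {σ, α'} (α' z) = qmk {σ, α'} z :=
              qmk_apply_eq (Set.mem_insert_of_mem _ (Set.mem_singleton _)) z
            by_cases hz1 : α' z = x
            · rw [hαz, hz1, Equiv.swap_apply_left, ← hq2, ← hz1]
              exact hα'z
            · by_cases hz2 : α' z = α x
              · rw [hαz, hz2, Equiv.swap_apply_right, hq2, ← hz2]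
                exact hα'z
              · rw [hαz, Equiv.swap_apply_of_ne_of_ne hz1 hz2]
                exact hα'z
        omega
      · have h3 : cyc (σ * α) + 1 = cyc (σ * α') := by
          rw [hrw]
          exact cyc_swap_mul_of_not_sameCycle hσxy hsc
        have h4 : oc {σ, α'} ≤ oc {σ, α} + 1 := by
          have e1 : oc (insert t {σ, α}) ≤ oc {σ, α} := oc_insert_swap_le _ _ _
          have e2 : oc {σ, α'} ≤ oc (insert t {σ, α'}) + 1 := oc_le_insert_swap_succ _ _ _
          have e3 : SG (insert t {σ, α}) = SG (insert t {σ, α'}) := by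
            have h5 : ({σ, α} : Set (Perm D)) = insert σ (insert α ∅) := by
              simp
            have h6 : ({σ, α'} : Set (Perm D)) = insert σ (insert α' ∅) := by
              simp
            rw [h5, h6]
            have e4 := closure_insert_swap_mul t (Equiv.swap_mul_self x (α x))
              (insert σ (∅ : Set (Perm D))) α
            have e5 : insert t (insert α (insert σ (∅ : Set (Perm D))))
                = insert t (insert σ (insert α (∅ : Set (Perm D)))) := by
              ext g; simp; tauto
            have e6 : insert t (insert α' (insert σ (∅ : Set (Perm D))))
                = insert t (insert σ (insert α' (∅ : Set (Perm D)))) := by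
              ext g; simp; tauto
            rw [← e5, ← e6]
            exact e4
          rw [oc_congr e3] at e1
          omega
        omega

lemma qmk_out {S : Set (Perm D)} (q : OQ S) : qmk S (Quotient.out q) = q :=
  Quotient.out_eq q

/-! ### Faces: orbits of a pair of fixed-point-free involutions -/

lemma no_fix_zpow {a s : Perm D} (ha2 : a * a = 1) (hs2 : s * s = 1)
    (haf : ∀ z, a z ≠ z) (hsf : ∀ z, s z ≠ z) (w : D) (k : ℤ) :
    ((s * a) ^ k) (s w) ≠ w := by
  intro hk
  set t := s * a with hts
  have hsi : s⁻¹ = s := inv_eq_of_mul_eq_one_right hs2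
  have hai : a⁻¹ = a := inv_eq_of_mul_eq_one_right ha2
  have hsp : ∀ z, s (s z) = z := by
    intro z
    have : (s * s) z = (1 : Perm D) z := by rw [hs2]
    simpa using this
  have hconj : s * t * s⁻¹ = t⁻¹ := by
    rw [hsi, hts, mul_inv_rev, hai, hsi, ← mul_assoc, hs2, one_mul]
  have hzk : ∀ j : ℤ, s * t ^ j = t ^ (-j) * s := by
    intro j
    have h1 : (MulAut.conj s) (t ^ j) = ((MulAut.conj s) t) ^ j := map_zpow _ _ _
    have h2 : ((MulAut.conj s) t : Perm D) = t⁻¹ := hconj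
    rw [h2, inv_zpow, ← zpow_neg] at h1
    have h3 : s * t ^ j * s⁻¹ = t ^ (-j) := h1
    rw [← h3, mul_assoc, mul_assoc, hsi, hs2, mul_one]
  have hswap : ∀ (j : ℤ) (z : D), s ((t ^ j) z) = (t ^ (-j)) (s z) := by
    intro j z
    have : (s * t ^ j) z = (t ^ (-j) * s) z := by rw [hzk]
    simpa using this
  rcases Int.even_or_odd k with ⟨j, hj⟩ | ⟨j, hj⟩
  · -- k = j + j
    subst hj
    have h1 : (t ^ j) ((t ^ j) (s w)) = w := by
      rw [zpow_add, Equiv.Perm.mul_apply] at hk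
      exact hk
    set w1 := (t ^ j) (s w) with hw1
    have h2 : (t ^ j) w1 = w := h1
    have h3 : s w1 = (t ^ (-j)) (s (s w)) := by rw [hw1, hswap]
    rw [hsp] at h3
    have h4 : (t ^ (-j)) w = w1 := by
      rw [← h2, ← Equiv.Perm.mul_apply, ← zpow_add]
      simp
    rw [h4] at h3
    exact hsf w1 h3
  · -- k = 2*j + 1
    subst hj
    have hsplit : t ^ (2 * j + 1) = t ^ (j + 1) * t ^ j := by
      rw [← zpow_add]; ring_nf
    have h1 : (t ^ (j + 1)) ((t ^ j) (s w)) = w := by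
      rw [hsplit] at hk
      simpa using hk
    set w1 := (t ^ j) (s w) with hw1
    have h3 : s w1 = (t ^ (-j)) (s (s w)) := by rw [hw1, hswap]
    rw [hsp] at h3
    have h4 : (t ^ (-j)) w = t w1 := by
      rw [← h1, ← Equiv.Perm.mul_apply, ← zpow_add]
      have : -j + (j + 1) = 1 := by ring
      rw [this, zpow_one]
    rw [h4] at h3
    have h5 : s w1 = s (a w1) := by
      rw [h3, hts]
      rfl
    have h6 : a w1 = w1 := by
      have := congrArg s h5
      rw [hsp, hsp] at this
      exact this.symm
    exact haf w1 h6

lemma two_mul_oc_pair_le {a s : Perm D} (ha2 : a * a = 1) (hs2 : s * s = 1)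
    (haf : ∀ z, a z ≠ z) (hsf : ∀ z, s z ≠ z) :
    2 * oc {a, s} ≤ cyc (s * a) := by
  classical
  have hmem : s * a ∈ SG {a, s} :=
    Subgroup.mul_mem _
      (Subgroup.subset_closure (Set.mem_insert_of_mem _ (Set.mem_singleton _)))
      (Subgroup.subset_closure (Set.mem_insert _ _))
  have desc : ∀ z w : D, qmk {s * a} z = qmk {s * a} w → qmk {a, s} z = qmk {a, s} w := by
    intro z w h
    obtain ⟨g, hg, rfl⟩ := qmk_eq_iff.1 h
    refine qmk_stable' ?_ hg w
    intro f hf z'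
    rw [Set.mem_singleton_iff] at hf
    subst hf
    exact qmk_stable hmem z'
  have hscl : ∀ z : D, qmk {a, s} (s z) = qmk {a, s} z := fun z =>
    qmk_apply_eq (Set.mem_insert_of_mem _ (Set.mem_singleton _)) z
  have hnofix : ∀ z : D, qmk {s * a} z ≠ qmk {s * a} (s z) := by
    intro z hc
    obtain ⟨k, hk⟩ := qmk_single_eq_iff.1 hc
    exact no_fix_zpow ha2 hs2 haf hsf z k hk
  set Φ : OQ {a, s} × Bool → OQ ({s * a} : Set (Perm D)) := fun p =>
    if p.2 then qmk {s * a} (s (Quotient.out p.1)) else qmk {s * a} (Quotient.out p.1)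
    with hΦ
  have hinj : Injective Φ := by
    rintro ⟨q1, b1⟩ ⟨q2, b2⟩ h
    simp only [hΦ] at h
    cases b1 <;> cases b2 <;> simp only [if_true, if_false, Bool.false_eq_true] at h
    · have := desc _ _ h
      rw [qmk_out, qmk_out] at this
      rw [this]
    · -- q1.out ~ s q2.out
      have h2 := desc _ _ h
      rw [qmk_out] at h2
      rw [hscl, qmk_out] at h2
      subst h2
      exact absurd h (hnofix _)
    · have h2 := desc _ _ h
      rw [hscl, qmk_out, qmk_out] at h2
      subst h2
      exact absurd h.symm (hnofix _)
    · have h2 := desc _ _ h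
      rw [hscl, hscl, qmk_out, qmk_out] at h2
      rw [h2]
  have hcard := Nat.card_le_card_of_injective Φ hinj
  rw [Nat.card_prod] at hcard
  have hb : Nat.card Bool = 2 := by
    rw [Nat.card_eq_fintype_card]
    rfl
  rw [hb] at hcard
  show 2 * Nat.card (OQ ({a, s} : Set (Perm D))) ≤ Nat.card (OQ ({s * a} : Set (Perm D)))
  omega

/-! ### Orbit counts of sums and bounded-order permutations -/

lemma card_le_mul_cyc {f : Perm D} {m : ℕ} (hm : 0 < m) (hf : f ^ m = 1) :
    Nat.card D ≤ cyc f * m := by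
  classical
  have hred : ∀ k : ℤ, f ^ k = f ^ ((k % (m : ℤ)).toNat) := by
    intro k
    have h0 : (0 : ℤ) < (m : ℤ) := by exact_mod_cast hm
    have h1 : (m : ℤ) * (k / m) + k % m = k := Int.mul_ediv_add_emod k m
    have h2 : f ^ k = f ^ ((m : ℤ) * (k / m)) * f ^ (k % (m : ℤ)) := by
      rw [← zpow_add, h1]
    have h3 : f ^ ((m : ℤ) * (k / m)) = 1 := by
      rw [zpow_mul]
      have : f ^ (m : ℤ) = 1 := by
        rw [zpow_natCast, hf]
      rw [this, one_zpow]
    have h4 : (0 : ℤ) ≤ k % m := Int.emod_nonneg k (by omega)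
    rw [h2, h3, one_mul, ← zpow_natCast, Int.toNat_of_nonneg h4]
  have hsurj : Surjective (fun p : OQ ({f} : Set (Perm D)) × Fin m =>
      (f ^ (p.2 : ℕ)) (Quotient.out p.1)) := by
    intro z
    have h1 : qmk {f} z = qmk {f} (Quotient.out (qmk {f} z)) := (qmk_out _).symm
    obtain ⟨k, hk⟩ := qmk_single_eq_iff.1 h1
    have hlt : ((k % (m : ℤ)).toNat) < m := by
      have h4 : (0 : ℤ) ≤ k % m := Int.emod_nonneg k (by omega)
      have h5 : k % (m : ℤ) < m := Int.emod_lt_of_pos k (by exact_mod_cast hm)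
      omega
    refine ⟨⟨qmk {f} z, ⟨(k % (m : ℤ)).toNat, hlt⟩⟩, ?_⟩
    simp only
    rw [← hred k]
    exact hk
  have := Nat.card_le_card_of_surjective _ hsurj
  rw [Nat.card_prod] at this
  have hfin : Nat.card (Fin m) = m := by rw [Nat.card_eq_fintype_card, Fintype.card_fin]
  rw [hfin] at this
  exact this

lemma cyc_sumCongr_ge {X : Type*} [Fintype X] [DecidableEq X] (p q : Perm X) :
    cyc p + cyc q ≤ cyc (Equiv.sumCongr p q : Perm (X ⊕ X)) := by
  classical
  have hpow : ∀ k : ℤ, (Equiv.sumCongr p q : Perm (X ⊕ X)) ^ k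
      = Equiv.sumCongr (p ^ k) (q ^ k) := by
    intro k
    have h1 := map_zpow (Equiv.Perm.sumCongrHom X X) (p, q) k
    have h2 : ((p, q) : Perm X × Perm X) ^ k = (p ^ k, q ^ k) := by
      ext <;> simp
    rw [h2] at h1
    exact h1.symm
  set Φ : OQ ({p} : Set (Perm X)) ⊕ OQ ({q} : Set (Perm X)) →
      OQ ({Equiv.sumCongr p q} : Set (Perm (X ⊕ X))) := fun w =>
    Sum.elim (fun u => qmk _ (Sum.inl (Quotient.out u)))
      (fun u => qmk _ (Sum.inr (Quotient.out u))) w with hΦ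
  have hinj : Injective Φ := by
    rintro (u1 | u1) (u2 | u2) h <;> simp only [hΦ, Sum.elim_inl, Sum.elim_inr] at h <;>
      obtain ⟨k, hk⟩ := qmk_single_eq_iff.1 h.symm <;> rw [hpow k] at hk <;>
      simp only [Equiv.sumCongr_apply, Sum.map_inl, Sum.map_inr] at hk
    · have : (p ^ k) (Quotient.out u1) = Quotient.out u2 := by
        exact Sum.inl.inj hk
      have h2 : qmk ({p} : Set (Perm X)) (Quotient.out u2) = qmk {p} (Quotient.out u1) := by
        rw [← this]
        exact qmk_single_eq_iff.2 ⟨k, rfl⟩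
      rw [qmk_out, qmk_out] at h2
      rw [h2]
    · exact absurd hk.symm (by simp)
    · exact absurd hk.symm (by simp)
    · have : (q ^ k) (Quotient.out u1) = Quotient.out u2 := by
        exact Sum.inr.inj hk
      have h2 : qmk ({q} : Set (Perm X)) (Quotient.out u2) = qmk {q} (Quotient.out u1) := by
        rw [← this]
        exact qmk_single_eq_iff.2 ⟨k, rfl⟩
      rw [qmk_out, qmk_out] at h2
      rw [h2]
  have hcard := Nat.card_le_card_of_injective Φ hinj
  rw [Nat.card_sum] at hcard
  exact hcard

/-! ### The jacket construction for a tensor graph -/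

lemma bp_invol : ∀ (c : Fin 3) (x : Fin 4), bubblePerm c (bubblePerm c x) = x := by decide

lemma bp_fixfree : ∀ (c : Fin 3) (x : Fin 4), bubblePerm c x ≠ x := by decide

lemma bp_four : ∀ (d e : Fin 3) (x : Fin 4),
    bubblePerm e (bubblePerm d (bubblePerm e (bubblePerm d x))) = x := by decide

lemma bp_ede : ∀ (d e : Fin 3) (x : Fin 4),
    bubblePerm e (bubblePerm d (bubblePerm e x)) = bubblePerm d x := by decide

lemma bp_third : ∀ (c d e : Fin 3), c ≠ d → c ≠ e → d ≠ e →
    ∀ x : Fin 4, bubblePerm e (bubblePerm d x) = bubblePerm c x := by decide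

lemma colPerm_apply (G : TGraph) (c : Fin 3) (v : G.V) :
    G.colPerm c v = (v.1, bubblePerm c v.2) := by
  cases v; rfl

lemma colPerm_invol (G : TGraph) (c : Fin 3) (v : G.V) :
    G.colPerm c (G.colPerm c v) = v := by
  cases v with
  | mk b x => simp [colPerm_apply, bp_invol]

lemma colPerm_fixfree (G : TGraph) (c : Fin 3) (v : G.V) : G.colPerm c v ≠ v := by
  cases v with
  | mk b x =>
    rw [colPerm_apply]
    intro h
    exact bp_fixfree c x (congrArg Prod.snd h)

/-- The edge involution of the jacket double cover. -/
def alp (G : TGraph) : Perm (G.V ⊕ G.V) :=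
  (Equiv.sumCongr G.pairing G.pairing).trans (Equiv.sumComm G.V G.V)

/-- The vertex rotation of the jacket double cover for the pair of colors `d, e`. -/
def sig (G : TGraph) (d e : Fin 3) : Perm (G.V ⊕ G.V) :=
  (Equiv.sumCongr (G.colPerm d) (G.colPerm e)).trans (Equiv.sumComm G.V G.V)

lemma alp_inl (G : TGraph) (v : G.V) : G.alp (Sum.inl v) = Sum.inr (G.pairing v) := rfl
lemma alp_inr (G : TGraph) (v : G.V) : G.alp (Sum.inr v) = Sum.inl (G.pairing v) := rfl
lemma sig_inl (G : TGraph) (d e : Fin 3) (v : G.V) :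
    G.sig d e (Sum.inl v) = Sum.inr (G.colPerm d v) := rfl
lemma sig_inr (G : TGraph) (d e : Fin 3) (v : G.V) :
    G.sig d e (Sum.inr v) = Sum.inl (G.colPerm e v) := rfl

lemma alp_sq (G : TGraph) : G.alp ^ 2 = 1 := by
  ext z
  rcases z with v | v <;>
    simp [pow_two, alp_inl, alp_inr, G.invol]

lemma sig_four (G : TGraph) (d e : Fin 3) : G.sig d e ^ 4 = 1 := by
  ext z
  rcases z with ⟨b, x⟩ | ⟨b, x⟩ <;>
    simp [pow_succ, Equiv.Perm.mul_apply, sig_inl, sig_inr, colPerm_apply, bp_four]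

lemma sig_mul_alp (G : TGraph) (d e : Fin 3) :
    G.sig d e * G.alp
      = Equiv.sumCongr (G.colPerm e * G.pairing) (G.colPerm d * G.pairing) := by
  ext z
  rcases z with v | v <;> rfl

lemma colPerm_mul_pairing_sq (G : TGraph) (c : Fin 3) :
    (G.colPerm c * G.pairing) * (G.colPerm c * G.pairing) =
      (G.colPerm c * G.pairing) * (G.colPerm c * G.pairing) := rfl

/-- The number of orbits on the double cover is at most 2 for a connected graph. -/
lemma oc_sig_alp_le_two (G : TGraph) [Nonempty G.B] (hG : G.Connected)
    (d e : Fin 3) (hde : d ≠ e) :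
    oc {G.sig d e, G.alp} ≤ 2 := by
  classical
  set S : Set (Perm (G.V ⊕ G.V)) := {G.sig d e, G.alp} with hS
  have hsig : ∀ z, qmk S (G.sig d e z) = qmk S z :=
    qmk_apply_eq (Set.mem_insert _ _)
  have halp : ∀ z, qmk S (G.alp z) = qmk S z :=
    qmk_apply_eq (Set.mem_insert_of_mem _ (Set.mem_singleton _))
  have hsig2 : ∀ z, qmk S (G.sig d e (G.sig d e z)) = qmk S z := by
    intro z; rw [hsig, hsig]
  have hsig3 : ∀ z, qmk S (G.sig d e (G.sig d e (G.sig d e z))) = qmk S z := by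
    intro z; rw [hsig, hsig, hsig]
  -- the key invariance property
  have key : ∀ g ∈ G.fullGroup, ∀ v : G.V,
      (qmk S (Sum.inl (g v)) = qmk S (Sum.inl v) ∧ qmk S (Sum.inr (g v)) = qmk S (Sum.inr v)) ∨
      (qmk S (Sum.inl (g v)) = qmk S (Sum.inr v) ∧ qmk S (Sum.inr (g v)) = qmk S (Sum.inl v)) := by
    intro g hg
    induction hg using Subgroup.closure_induction with
    | mem f hf =>
        intro v
        rcases hf with rfl | ⟨c, rfl⟩
        · -- the pairing
          right
          constructor
          · have := halp (Sum.inr v)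
            rwa [alp_inr] at this
          · have := halp (Sum.inl v)
            rwa [alp_inl] at this
        · -- a colored matching
          by_cases hcd : c = d
          · subst hcd
            right
            constructor
            · have := hsig3 (Sum.inr v)
              rw [sig_inr, sig_inl, sig_inr] at this
              rw [← this]
              congr 2
              cases v with
              | mk b x => simp [colPerm_apply, bp_ede]
            · have := hsig (Sum.inl v)
              rwa [sig_inl] at this
          · by_cases hce : c = e
            · subst hce
              right
              constructor
              · have := hsig (Sum.inr v)
                rwa [sig_inr] at this
              · have := hsig3 (Sum.inl v)
                rw [sig_inl, sig_inr, sig_inl] at this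
                rw [← this]
                congr 2
                cases v with
                | mk b x => simp [colPerm_apply, bp_ede]
            · -- the third color
              left
              constructor
              · have := hsig2 (Sum.inl v)
                rw [sig_inl, sig_inr] at this
                rw [← this]
                congr 2
                cases v with
                | mk b x =>
                  simp only [colPerm_apply]
                  rw [bp_third c d e hcd hce hde]
              · have := hsig2 (Sum.inr v)
                rw [sig_inr, sig_inl] at this
                rw [← this]
                congr 2
                cases v with
                | mk b x =>
                  simp only [colPerm_apply]
                  rw [bp_third c e d hce hcd (fun h => hde h.symm)]
    | one => intro v; left; exact ⟨rfl, rfl⟩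
    | mul g1 g2 hg1 hg2 ih1 ih2 =>
        intro v
        have happ : (g1 * g2) v = g1 (g2 v) := rfl
        rw [happ]
        rcases ih2 v with ⟨h1, h2⟩ | ⟨h1, h2⟩ <;> rcases ih1 (g2 v) with ⟨h3, h4⟩ | ⟨h3, h4⟩
        · left; exact ⟨h3.trans h1, h4.trans h2⟩
        · right; exact ⟨h3.trans h2, h4.trans h1⟩
        · right; exact ⟨h3.trans h1, h4.trans h2⟩
        · left; exact ⟨h3.trans h2, h4.trans h1⟩
    | inv g1 hg1 ih =>
        intro v
        have happ : g1 (g1⁻¹ v) = v := Equiv.Perm.apply_inv_self g1 v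
        rcases ih (g1⁻¹ v) with ⟨h1, h2⟩ | ⟨h1, h2⟩
        · rw [happ] at h1 h2
          left; exact ⟨h1.symm, h2.symm⟩
        · rw [happ] at h1 h2
          right; exact ⟨h2.symm, h1.symm⟩
  obtain ⟨b0⟩ := ‹Nonempty G.B›
  set v0 : G.V := (b0, (0 : Fin 4)) with hv0
  have hall : ∀ z : G.V ⊕ G.V,
      qmk S z = qmk S (Sum.inl v0) ∨ qmk S z = qmk S (Sum.inr v0) := by
    have hmain : ∀ v : G.V,
        (qmk S (Sum.inl v) = qmk S (Sum.inl v0) ∧ qmk S (Sum.inr v) = qmk S (Sum.inr v0)) ∨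
        (qmk S (Sum.inl v) = qmk S (Sum.inr v0) ∧ qmk S (Sum.inr v) = qmk S (Sum.inl v0)) := by
      intro v
      obtain ⟨⟨g, hg⟩, hgv⟩ := MulAction.mem_orbit_iff.1 (hG v v0)
      have hgv' : g v0 = v := hgv
      rw [← hgv']
      exact key g hg v0
    rintro (v | v)
    · rcases hmain v with ⟨h, _⟩ | ⟨h, _⟩
      · exact Or.inl h
      · exact Or.inr h
    · rcases hmain v with ⟨_, h⟩ | ⟨_, h⟩
      · exact Or.inr h
      · exact Or.inl h
  have hsurj : Surjective (fun b : Bool =>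
      if b then qmk S (Sum.inl v0) else qmk S (Sum.inr v0)) := by
    intro q
    obtain ⟨z, rfl⟩ := qmk_surjective S q
    rcases hall z with h | h
    · exact ⟨true, h.symm⟩
    · exact ⟨false, h.symm⟩
  have := Nat.card_le_card_of_surjective _ hsurj
  have hb : Nat.card Bool = 2 := by rw [Nat.card_eq_fintype_card]; rfl
  rw [hb] at this
  exact this

/-- The jacket bound: the faces of two distinct colors of a connected graph. -/
lemma pair_faces_le (G : TGraph) (hG : G.Connected) {d e : Fin 3} (hde : d ≠ e) :
    G.numFaces d + G.numFaces e ≤ G.b + 2 := by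
  classical
  have hfg : ∀ c : Fin 3, G.numFaces c = oc {G.pairing, G.colPerm c} := fun c => rfl
  cases isEmpty_or_nonempty G.B with
  | inl h =>
      haveI : IsEmpty G.V := by
        constructor
        rintro ⟨b, x⟩
        exact h.false b
      have hcard : Nat.card G.V = 0 := Nat.card_of_isEmpty
      have h1 := oc_le_card ({G.pairing, G.colPerm d} : Set (Perm G.V))
      have h2 := oc_le_card ({G.pairing, G.colPerm e} : Set (Perm G.V))
      rw [hcard] at h1 h2
      rw [hfg d, hfg e]
      omega
  | inr h =>
      have hcardV : Nat.card G.V = 4 * G.b := by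
        rw [Nat.card_eq_fintype_card]
        show Fintype.card (G.B × Fin 4) = 4 * G.b
        rw [Fintype.card_prod, Fintype.card_fin, TGraph.b]
        ring
      have hcardD : Nat.card (G.V ⊕ G.V) = 8 * G.b := by
        rw [Nat.card_sum, hcardV]
        ring
      -- Euler bound on the double cover
      have heuler := euler_bound (G.sig d e) G.alp
      have horb := oc_sig_alp_le_two G hG d e hde
      -- lower bounds on vertex and edge cycles
      have halp : Nat.card (G.V ⊕ G.V) ≤ cyc G.alp * 2 :=
        card_le_mul_cyc (by omega) (alp_sq G)
      have hsig : Nat.card (G.V ⊕ G.V) ≤ cyc (G.sig d e) * 4 :=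
        card_le_mul_cyc (by omega) (sig_four G d e)
      -- the faces of the double cover
      have hface : cyc (G.colPerm e * G.pairing) + cyc (G.colPerm d * G.pairing)
          ≤ cyc (G.sig d e * G.alp) := by
        rw [sig_mul_alp]
        exact cyc_sumCongr_ge _ _
      -- face doubling per color
      have hpair_inv : G.pairing * G.pairing = 1 := by
        apply Equiv.ext
        intro v
        rw [Equiv.Perm.mul_apply, G.invol]
        rfl
      have hcol_inv : ∀ c : Fin 3, G.colPerm c * G.colPerm c = 1 := by
        intro c
        apply Equiv.ext
        intro v
        rw [Equiv.Perm.mul_apply, colPerm_invol]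
        rfl
      have hd2 : 2 * oc {G.pairing, G.colPerm d} ≤ cyc (G.colPerm d * G.pairing) :=
        two_mul_oc_pair_le hpair_inv (hcol_inv d) G.fixfree (colPerm_fixfree G d)
      have he2 : 2 * oc {G.pairing, G.colPerm e} ≤ cyc (G.colPerm e * G.pairing) :=
        two_mul_oc_pair_le hpair_inv (hcol_inv e) G.fixfree (colPerm_fixfree G e)
      rw [hfg d, hfg e]
      omega

end TGraph

/-- For every connected graph `G` of the rank-3 tetrahedral
tensor model, `F(G) ≤ (3/2) b(G) + 3`; consequently the degree
`ω(G) = 3 + (3/2) b(G) - F(G)` is a non-negative half-integer, establishing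
the existence of the `1/N` expansion. -/
theorem one_over_N_expansion (G : TGraph) (hG : G.Connected) :
    (G.F : ℚ) ≤ 3 / 2 * G.b + 3 ∧
      0 ≤ (3 : ℚ) + 3 / 2 * G.b - G.F ∧
      ∃ n : ℕ, (3 : ℚ) + 3 / 2 * G.b - G.F = n / 2 := by
  have h01 := TGraph.pair_faces_le G hG (show (0 : Fin 3) ≠ 1 by decide)
  have h02 := TGraph.pair_faces_le G hG (show (0 : Fin 3) ≠ 2 by decide)
  have h12 := TGraph.pair_faces_le G hG (show (1 : Fin 3) ≠ 2 by decide)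
  have hF : G.F = G.numFaces 0 + G.numFaces 1 + G.numFaces 2 := by
    rw [TGraph.F, Fin.sum_univ_three]
  have hmain : 2 * G.F ≤ 3 * G.b + 6 := by omega
  have hcastineq : (2 * G.F : ℚ) ≤ 3 * G.b + 6 := by exact_mod_cast hmain
  refine ⟨by linarith, by linarith, ⟨3 * G.b + 6 - 2 * G.F, ?_⟩⟩
  have hcast : ((3 * G.b + 6 - 2 * G.F : ℕ) : ℚ) = 3 * (G.b : ℚ) + 6 - 2 * G.F := by
    rw [Nat.cast_sub hmain]
    push_cast
    ring
  rw [hcast]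
  ring
end

section
/- The unique connected graph of the tetrahedral model with two bubbles maximizing the number of faces is G_2, the graph in which corresponding vertices of the two bubbles are joined by four color-0 edges so that all six faces have length 2; it has F(G_2) = 6 faces. -/
/-!  A combinatorial model of the Feynman graphs of the rank-3 tetrahedral
(`O(N)^3`) tensor model.

A graph consists of a finite set `B` of bubbles (copies of the tetrahedron
`K_4`); each bubble has four vertices, so the vertex set is `B × Fin 4`.
Inside every bubble the edges of colors `1,2,3` are given once and for all by
the three fixed-point-free involutions of `Fin 4` (the proper 3-edge-coloring
of `K_4`).  The color-0 propagator edges, one per vertex, are encoded by a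
fixed-point-free involution `pairing` of the vertex set. -/

open Equiv

open TGraph

open TGraph

/-! ### Auxiliary machinery for the proof -/

namespace G2Max

open TGraph Relation

/-! #### Generic lemmas about reflexive-transitive closures and orbits -/

theorem rtg_map_inj {α β : Type*} (e : α → β) (he : Function.Injective e)
    (RA : α → α → Prop) (RB : β → β → Prop)
    (h1 : ∀ a b, RA a b ↔ RB (e a) (e b))
    (h2 : ∀ (a : α) (y : β), RB (e a) y → ∃ b, y = e b) (a b : α) :
    ReflTransGen RA a b ↔ ReflTransGen RB (e a) (e b) := by
  constructor
  · intro h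
    induction h with
    | refl => exact .refl
    | tail _ hstep ih => exact ih.tail ((h1 _ _).1 hstep)
  · intro h
    have key : ∀ y, ReflTransGen RB (e a) y → ∃ c, y = e c ∧ ReflTransGen RA a c := by
      intro y hy
      induction hy with
      | refl => exact ⟨a, rfl, .refl⟩
      | tail _ hstep ih =>
        obtain ⟨c, rfl, hc⟩ := ih
        obtain ⟨d, rfl⟩ := h2 c _ hstep
        exact ⟨d, rfl, hc.tail ((h1 _ _).2 hstep)⟩
    obtain ⟨c, hc, hac⟩ := key _ h
    rw [he hc]
    exact hac

theorem rtg_symm_of {β : Type*} {R : β → β → Prop} (h : Symmetric R) :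
    Symmetric (ReflTransGen R) := by
  intro x y hxy
  induction hxy with
  | refl => exact .refl
  | tail _ hbc ih => exact ih.head (h hbc)

theorem orbit_closure_iff_rtg {β : Type*} (S : Set (Equiv.Perm β))
    (hS : ∀ f ∈ S, ∀ x, f (f x) = x) (v x : β) :
    x ∈ MulAction.orbit (Subgroup.closure S) v ↔
      ReflTransGen (fun a b => ∃ f ∈ S, b = f a) v x := by
  have hsymm : Symmetric (fun a b : β => ∃ f ∈ S, b = f a) := by
    rintro a b ⟨f, hf, rfl⟩
    exact ⟨f, hf, (hS f hf a).symm⟩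
  constructor
  · rintro ⟨⟨g, hg⟩, rfl⟩
    have H : ∀ g ∈ Subgroup.closure S, ∀ w,
        ReflTransGen (fun a b => ∃ f ∈ S, b = f a) w (g w) := by
      intro g hg
      induction hg using Subgroup.closure_induction with
      | mem f hf => exact fun w => ReflTransGen.single ⟨f, hf, rfl⟩
      | one => exact fun w => .refl
      | mul g h hg hh ihg ihh =>
        intro w
        have hmul : (g * h) w = g (h w) := rfl
        rw [hmul]
        exact (ihh w).trans (ihg (h w))
      | inv g hg ih =>
        intro w
        have h1 := ih (g⁻¹ w)
        have h2 : g (g⁻¹ w) = w := by simp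
        rw [h2] at h1
        exact (rtg_symm_of hsymm) h1
    exact H g hg v
  · intro h
    induction h with
    | refl => exact MulAction.mem_orbit_self v
    | tail _ hstep ih =>
      obtain ⟨f, hf, rfl⟩ := hstep
      rcases MulAction.mem_orbit_iff.1 ih with ⟨g, rfl⟩
      exact MulAction.mem_orbit_iff.2 ⟨⟨f, Subgroup.subset_closure hf⟩ * g, rfl⟩

theorem natCard_quotient {β γ : Type*} [Fintype β] (s : Setoid β) (f : β → γ)
    [DecidableEq γ] (h : ∀ u v, f u = f v ↔ s.r u v) :
    Nat.card (Quotient s) = (Finset.univ.image f).card := by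
  let F : Quotient s → γ := Quotient.lift f (fun u v huv => (h u v).2 huv)
  have hinj : Function.Injective F := by
    intro q1 q2
    induction q1 using Quotient.ind
    induction q2 using Quotient.ind
    intro hF
    exact Quotient.sound ((h _ _).1 hF)
  have hrange : Set.range F = ↑(Finset.univ.image f) := by
    ext c
    constructor
    · rintro ⟨q, rfl⟩
      induction q using Quotient.ind with
      | _ v => exact Finset.mem_coe.2 (Finset.mem_image.2 ⟨v, Finset.mem_univ v, rfl⟩)
    · intro hc
      obtain ⟨v, _, rfl⟩ := Finset.mem_image.1 (Finset.mem_coe.1 hc)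
      exact ⟨⟦v⟧, rfl⟩
  have h1 : Nat.card (Quotient s) = Nat.card (Set.range F) :=
    (Nat.card_range_of_injective hinj).symm
  rw [h1, hrange, Nat.card_coe_set_eq, Set.ncard_coe_finset]

/-! #### The computable layer on `ℕ` -/

def univN : List ℕ := [0,1,2,3,4,5,6,7]

theorem mem_univN (n : ℕ) : n ∈ univN ↔ n < 8 := by
  simp only [univN, List.mem_cons, List.not_mem_nil, or_false]
  omega

def vpermN (c : ℕ) (k : ℕ) : ℕ :=
  if c = 0 then (if k = 0 then 1 else if k = 1 then 0 else if k = 2 then 3 else 2)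
  else if c = 1 then (if k = 0 then 2 else if k = 1 then 3 else if k = 2 then 0 else 1)
  else (if k = 0 then 3 else if k = 1 then 2 else if k = 2 then 1 else 0)

def colN (c : ℕ) (x : ℕ) : ℕ := 4 * (x / 4) + vpermN c (x % 4)

def mfunN (m : List (ℕ × ℕ)) (x : ℕ) : ℕ :=
  match m with
  | [] => x
  | (a, b) :: m => if x = a then b else if x = b then a else mfunN m x

def invols : Nat → List ℕ → List (List (ℕ × ℕ))
  | _, [] => [[]]
  | 0, _ :: _ => []
  | n+1, a :: l => l.flatMap fun b => (invols n (l.erase b)).map ((a, b) :: ·)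

def iterList (f : ℕ → ℕ) : ℕ → ℕ → List ℕ
  | _, 0 => []
  | v, n+1 => v :: iterList f (f v) n

def orbitLN (a b : ℕ → ℕ) (v : ℕ) : List ℕ :=
  iterList (a ∘ b) v 8 ++ iterList (a ∘ b) (a v) 8

def minOrbitN (a b : ℕ → ℕ) (v : ℕ) : ℕ := (orbitLN a b v).foldr min v

def faceN (q : ℕ → ℕ) (c : ℕ) : ℕ :=
  ((univN.map (fun v => minOrbitN q (colN c) v)).dedup).length

def faceSumN (q : ℕ → ℕ) : ℕ := faceN q 0 + faceN q 1 + faceN q 2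

def crossN (q : ℕ → ℕ) : Prop := ∃ v ∈ univN, q v / 4 ≠ v / 4

instance : DecidablePred crossN := fun q => by unfold crossN; infer_instance

def p2N : ℕ → ℕ := fun x => if x < 4 then x + 4 else x - 4

def vpermsN : List (ℕ → ℕ) := [id, vpermN 0, vpermN 1, vpermN 2]
def bpermsN : List (ℕ → ℕ) := [id, fun b => 1 - b]

def candListN : List (ℕ → ℕ) :=
  bpermsN.flatMap fun β => vpermsN.flatMap fun σ0 => vpermsN.map fun σ1 =>
    fun x : ℕ => 4 * β (x / 4) + (if x < 4 then σ0 (x % 4) else σ1 (x % 4))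

def isoN (q : ℕ → ℕ) : Prop := ∃ ψ ∈ candListN, ∀ v ∈ univN, ψ (q v) = p2N (ψ v)

instance : DecidablePred isoN := fun q => by unfold isoN; infer_instance

/-! #### The main finite check -/

set_option maxHeartbeats 10000000 in
set_option maxRecDepth 10000 in
theorem mainEnumN : ∀ m ∈ invols 8 univN,
    crossN (mfunN m) →
      (faceSumN (mfunN m) ≤ 6 ∧ (faceSumN (mfunN m) = 6 → isoN (mfunN m))) := by
  decide

/-! #### Completeness of the enumeration of pairings -/

theorem invols_complete (q : ℕ → ℕ) (hinv : ∀ x, q (q x) = x) :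
    ∀ (n : ℕ) (l : List ℕ), l.Nodup → l.length ≤ n →
    (∀ x ∈ l, q x ∈ l) → (∀ x ∈ l, q x ≠ x) →
    ∃ m ∈ invols n l, ∀ x ∈ l, mfunN m x = q x := by
  intro n
  induction n with
  | zero =>
    rintro (_ | ⟨a, t⟩) _ hlen _ _
    · exact ⟨[], by simp [invols], by simp⟩
    · simp at hlen
  | succ n ih =>
    rintro (_ | ⟨a, t⟩) hnd hlen hcl hfix
    · exact ⟨[], by simp [invols], by simp⟩
    · have hqa : q a ∈ t := by
        have h := hcl a (List.mem_cons_self)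
        rcases List.mem_cons.1 h with h | h
        · exact absurd h (hfix a (List.mem_cons_self))
        · exact h
      set b := q a with hb
      have hat : a ∉ t := (List.nodup_cons.1 hnd).1
      have hndt : t.Nodup := (List.nodup_cons.1 hnd).2
      have hqb : q b = a := by rw [hb, hinv]
      have hnd' : (t.erase b).Nodup := hndt.erase b
      have hlen' : (t.erase b).length ≤ n := by
        have h := List.length_erase_of_mem hqa
        simp only [List.length_cons] at hlen
        omega
      have hmem' : ∀ x : ℕ, x ∈ t.erase b ↔ x ≠ b ∧ x ∈ t := fun x => hndt.mem_erase_iff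
      have hcl' : ∀ x ∈ t.erase b, q x ∈ t.erase b := by
        intro x hx
        obtain ⟨hxb, hxt⟩ := (hmem' x).1 hx
        have hqx : q x ∈ a :: t := hcl x (List.mem_cons_of_mem a hxt)
        have hqxa : q x ≠ a := by
          intro h
          have h2 := congrArg q h
          rw [hinv] at h2
          exact hxb (h2.trans hb.symm.symm)
        have hqxt : q x ∈ t := by
          rcases List.mem_cons.1 hqx with h | h
          · exact absurd h hqxa
          · exact h
        refine (hmem' _).2 ⟨?_, hqxt⟩
        intro h
        have hx2 : x = q b := by rw [← h, hinv]
        rw [hqb] at hx2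
        exact hat (hx2 ▸ hxt)
      have hfix' : ∀ x ∈ t.erase b, q x ≠ x := fun x hx =>
        hfix x (List.mem_cons_of_mem a ((hmem' x).1 hx).2)
      obtain ⟨m', hm', hm'eq⟩ := ih (t.erase b) hnd' hlen' hcl' hfix'
      refine ⟨(a, b) :: m', ?_, ?_⟩
      · exact List.mem_flatMap.2 ⟨b, hqa, List.mem_map.2 ⟨m', hm', rfl⟩⟩
      · intro x hx
        rcases List.mem_cons.1 hx with rfl | hxt
        · simp [mfunN, hb]
        · by_cases hxb : x = b
          · simp only [mfunN]
            rw [if_neg (fun h : x = a => hat (by rw [← h]; exact hxt)), if_pos hxb, hxb, hqb]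
          · have hx' : x ∈ t.erase b := (hmem' x).2 ⟨hxb, hxt⟩
            simp only [mfunN]
            rw [if_neg (fun h : x = a => hat (by rw [← h]; exact hxt)), if_neg hxb]
            exact hm'eq x hx'

/-! #### Lemmas about the orbit lists -/

theorem mem_iterList (f : ℕ → ℕ) :
    ∀ (n v x : ℕ), x ∈ iterList f v n ↔ ∃ k < n, x = f^[k] v
  | 0, v, x => by simp [iterList]
  | n+1, v, x => by
    simp only [iterList, List.mem_cons, mem_iterList f n (f v) x]
    constructor
    · rintro (rfl | ⟨k, hk, rfl⟩)
      · exact ⟨0, Nat.succ_pos n, rfl⟩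
      · exact ⟨k+1, by omega, by rw [Function.iterate_succ_apply]⟩
    · rintro ⟨k, hk, rfl⟩
      cases k with
      | zero => exact Or.inl rfl
      | succ k => exact Or.inr ⟨k, by omega, by rw [Function.iterate_succ_apply]⟩

theorem exists_period (f : ℕ → ℕ) (hinj : Function.Injective f)
    (hf : ∀ x, x < 8 → f x < 8) (v : ℕ) (hv : v < 8) :
    ∃ p, 0 < p ∧ p ≤ 8 ∧ f^[p] v = v := by
  have hlt : ∀ k : ℕ, f^[k] v < 8 := by
    intro k
    induction k with
    | zero => exact hv
    | succ k ihk => rw [Function.iterate_succ_apply']; exact hf _ ihk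
  have hpig : ∃ i j : Fin 9, i ≠ j ∧
      (⟨f^[i.1] v, hlt i.1⟩ : Fin 8) = ⟨f^[j.1] v, hlt j.1⟩ := by
    apply Fintype.exists_ne_map_eq_of_card_lt (fun i : Fin 9 => (⟨f^[i.1] v, hlt i.1⟩ : Fin 8))
    simp
  obtain ⟨i, j, hne, heq⟩ := hpig
  have hval : f^[i.1] v = f^[j.1] v := congrArg Fin.val heq
  have hvne : i.1 ≠ j.1 := fun h => hne (Fin.ext h)
  have main : ∀ i' j' : ℕ, i' < j' → j' ≤ 8 → f^[i'] v = f^[j'] v →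
      ∃ p, 0 < p ∧ p ≤ 8 ∧ f^[p] v = v := by
    intro i' j' hij hj8 hveq
    refine ⟨j' - i', by omega, by omega, ?_⟩
    have h3 : f^[i'] (f^[j' - i'] v) = f^[i'] v := by
      rw [← Function.iterate_add_apply, show i' + (j' - i') = j' by omega]
      exact hveq.symm
    exact hinj.iterate i' h3
  rcases Nat.lt_or_ge i.1 j.1 with h | h
  · exact main i.1 j.1 h (by omega) hval
  · exact main j.1 i.1 (by omega) (by omega) hval.symm

theorem iterate_mod (f : ℕ → ℕ) (v p : ℕ) (hp : 0 < p) (hper : f^[p] v = v) :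
    ∀ n, f^[n] v = f^[n % p] v := by
  intro n
  induction n using Nat.strong_induction_on with
  | _ n ihn =>
    by_cases h : n < p
    · rw [Nat.mod_eq_of_lt h]
    · rw [Nat.mod_eq_sub_mod (by omega), show n = (n - p) + p by omega,
        Function.iterate_add_apply, hper, show n - p + p - p = n - p by omega]
      exact ihn (n - p) (by omega)

theorem cyc_iter (f : ℕ → ℕ) (hinj : Function.Injective f)
    (hf : ∀ x, x < 8 → f x < 8) (v : ℕ) (hv : v < 8) :
    ∀ n, ∃ k < 8, f^[n] v = f^[k] v := by
  obtain ⟨p, hp0, hp8, hper⟩ := exists_period f hinj hf v hv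
  intro n
  exact ⟨n % p, by have := Nat.mod_lt n hp0; omega, iterate_mod f v p hp0 hper n⟩

theorem cyc_inv (f g : ℕ → ℕ) (hgf : ∀ x, g (f x) = x) (hinj : Function.Injective f)
    (hf : ∀ x, x < 8 → f x < 8) (v : ℕ) (hv : v < 8) :
    ∀ n, ∃ k < 8, g^[n] v = f^[k] v := by
  have hcancel : ∀ (n : ℕ) (x : ℕ), g^[n] (f^[n] x) = x := by
    intro n
    induction n with
    | zero => intro x; rfl
    | succ n ihn =>
      intro x
      rw [Function.iterate_succ_apply' f, Function.iterate_succ_apply g, hgf]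
      exact ihn x
  obtain ⟨p, hp0, hp8, hper⟩ := exists_period f hinj hf v hv
  intro n
  have hfix : f^[p * n] v = v := by
    rw [Function.iterate_mul]
    exact Function.iterate_fixed hper n
  have hge : n ≤ p * n := Nat.le_mul_of_pos_left n hp0
  have h1 : g^[n] v = f^[p * n - n] v := by
    conv_lhs => rw [← hfix, show p * n = n + (p * n - n) by omega,
      Function.iterate_add_apply, hcancel]
  obtain ⟨k, hk, hk2⟩ := cyc_iter f hinj hf v hv (p * n - n)
  exact ⟨k, hk, by rw [h1, hk2]⟩

theorem mem_orbitLN (a b : ℕ → ℕ) (ha : ∀ x, a (a x) = x) (hb : ∀ x, b (b x) = x)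
    (ha8 : ∀ x, x < 8 → a x < 8) (hb8 : ∀ x, x < 8 → b x < 8)
    (v : ℕ) (hv : v < 8) (x : ℕ) :
    x ∈ orbitLN a b v ↔ ReflTransGen (fun u w => w = a u ∨ w = b u) v x := by
  have hainj : Function.Injective a := fun x y h => by
    have h2 := congrArg a h; rwa [ha, ha] at h2
  have hbinj : Function.Injective b := fun x y h => by
    have h2 := congrArg b h; rwa [hb, hb] at h2
  set F := a ∘ b with hF
  set G := b ∘ a with hG
  have hGF : ∀ x, G (F x) = x := fun x => by simp [hF, hG, ha, hb]
  have hFinj : Function.Injective F := hainj.comp hbinj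
  have hF8 : ∀ x, x < 8 → F x < 8 := fun x hx => ha8 _ (hb8 _ hx)
  have haF : ∀ (k : ℕ) (x : ℕ), a (F^[k] x) = G^[k] (a x) := by
    intro k
    induction k with
    | zero => intro x; rfl
    | succ k ihk =>
      intro x
      rw [Function.iterate_succ_apply F, Function.iterate_succ_apply G, ihk]
      simp [hF, hG, ha]
  have hbF : ∀ (k : ℕ) (x : ℕ), b (F^[k] x) = G^[k] (b x) := by
    intro k
    induction k with
    | zero => intro x; rfl
    | succ k ihk =>
      intro x
      rw [Function.iterate_succ_apply F, Function.iterate_succ_apply G, ihk]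
      simp [hF, hG, hb, ha]
  have hav8 : a v < 8 := ha8 v hv
  have hmem : ∀ y, y ∈ orbitLN a b v ↔
      (∃ k < 8, y = F^[k] v) ∨ (∃ k < 8, y = F^[k] (a v)) := by
    intro y
    simp only [orbitLN, List.mem_append, mem_iterList]
    exact Iff.rfl
  constructor
  · intro hx
    rcases (hmem x).1 hx with ⟨k, -, rfl⟩ | ⟨k, -, rfl⟩
    · clear hx
      induction k with
      | zero => exact .refl
      | succ k ihk =>
        rw [Function.iterate_succ_apply' F]
        exact (ihk.tail (Or.inr rfl)).tail (Or.inl rfl)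
    · clear hx
      induction k with
      | zero => exact ReflTransGen.single (Or.inl rfl)
      | succ k ihk =>
        rw [Function.iterate_succ_apply' F]
        exact (ihk.tail (Or.inr rfl)).tail (Or.inl rfl)
  · intro hx
    rw [hmem]
    induction hx with
    | refl => exact Or.inl ⟨0, by omega, rfl⟩
    | tail hpath hstep ih =>
      rename_i y z
      rcases ih with ⟨k, hk, rfl⟩ | ⟨k, hk, rfl⟩
      · rcases hstep with rfl | rfl
        · rw [haF]
          obtain ⟨j, hj, hj2⟩ := cyc_inv F G hGF hFinj hF8 (a v) hav8 k
          exact Or.inr ⟨j, hj, hj2⟩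
        · rw [hbF]
          have hbv : b v = G (a v) := by simp [hG, ha]
          rw [hbv, ← Function.iterate_succ_apply G]
          obtain ⟨j, hj, hj2⟩ := cyc_inv F G hGF hFinj hF8 (a v) hav8 (k + 1)
          exact Or.inr ⟨j, hj, hj2⟩
      · rcases hstep with rfl | rfl
        · rw [haF, ha]
          obtain ⟨j, hj, hj2⟩ := cyc_inv F G hGF hFinj hF8 v hv k
          exact Or.inl ⟨j, hj, hj2⟩
        · rw [hbF]
          have hba : b (a v) = G v := rfl
          rw [hba, ← Function.iterate_succ_apply G]
          obtain ⟨j, hj, hj2⟩ := cyc_inv F G hGF hFinj hF8 v hv (k + 1)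
          exact Or.inl ⟨j, hj, hj2⟩

theorem foldr_min_mem : ∀ (l : List ℕ) (v : ℕ), l.foldr min v = v ∨ l.foldr min v ∈ l
  | [], v => Or.inl rfl
  | a :: l, v => by
    simp only [List.foldr_cons, List.mem_cons]
    rcases le_total a (l.foldr min v) with h | h
    · rw [min_eq_left h]
      exact Or.inr (Or.inl rfl)
    · rw [min_eq_right h]
      rcases foldr_min_mem l v with h2 | h2
      · exact Or.inl h2
      · exact Or.inr (Or.inr h2)

theorem foldr_min_le : ∀ (l : List ℕ) (v : ℕ), (∀ x ∈ l, l.foldr min v ≤ x) ∧ l.foldr min v ≤ v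
  | [], v => ⟨by simp, le_refl v⟩
  | a :: l, v => by
    obtain ⟨h1, h2⟩ := foldr_min_le l v
    constructor
    · intro x hx
      rcases List.mem_cons.1 hx with rfl | hx
      · exact min_le_left _ _
      · exact le_trans (min_le_right _ _) (h1 x hx)
    · exact le_trans (min_le_right _ _) h2

theorem self_mem_orbitLN (a b : ℕ → ℕ) (v : ℕ) : v ∈ orbitLN a b v := by
  simp only [orbitLN, List.mem_append, mem_iterList]
  exact Or.inl ⟨0, by omega, rfl⟩

theorem minOrbitN_eq_iff (a b : ℕ → ℕ) (ha : ∀ x, a (a x) = x) (hb : ∀ x, b (b x) = x)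
    (ha8 : ∀ x, x < 8 → a x < 8) (hb8 : ∀ x, x < 8 → b x < 8)
    (u v : ℕ) (hu : u < 8) (hv : v < 8) :
    minOrbitN a b u = minOrbitN a b v ↔
      ReflTransGen (fun x w => w = a x ∨ w = b x) u v := by
  have hsymm : Symmetric (fun x w : ℕ => w = a x ∨ w = b x) := by
    rintro x w (rfl | rfl)
    · exact Or.inl (ha x).symm
    · exact Or.inr (hb x).symm
  have hRsymm := rtg_symm_of hsymm
  have hmin_mem : ∀ w, w < 8 → minOrbitN a b w ∈ orbitLN a b w := by
    intro w _
    rcases foldr_min_mem (orbitLN a b w) w with h | h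
    · rw [minOrbitN, h]; exact self_mem_orbitLN a b w
    · exact h
  have hmin_le : ∀ w, ∀ x ∈ orbitLN a b w, minOrbitN a b w ≤ x :=
    fun w => (foldr_min_le (orbitLN a b w) w).1
  constructor
  · intro h
    have h1 : ReflTransGen (fun x w => w = a x ∨ w = b x) u (minOrbitN a b u) :=
      (mem_orbitLN a b ha hb ha8 hb8 u hu _).1 (hmin_mem u hu)
    have h2 : ReflTransGen (fun x w => w = a x ∨ w = b x) v (minOrbitN a b v) :=
      (mem_orbitLN a b ha hb ha8 hb8 v hv _).1 (hmin_mem v hv)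
    rw [h] at h1
    exact h1.trans (hRsymm h2)
  · intro h
    have hset : ∀ x, x ∈ orbitLN a b u ↔ x ∈ orbitLN a b v := by
      intro x
      rw [mem_orbitLN a b ha hb ha8 hb8 u hu, mem_orbitLN a b ha hb ha8 hb8 v hv]
      exact ⟨fun h2 => (hRsymm h).trans h2, fun h2 => h.trans h2⟩
    have h1 : minOrbitN a b u ≤ minOrbitN a b v :=
      hmin_le u _ ((hset _).2 (hmin_mem v hv))
    have h2 : minOrbitN a b v ≤ minOrbitN a b u :=
      hmin_le v _ ((hset _).1 (hmin_mem u hu))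
    omega

/-! #### Congruence lemmas for functions agreeing on `univN` -/

theorem iterList_congr (f g : ℕ → ℕ) (hfg : ∀ x, x < 8 → f x = g x)
    (hf : ∀ x, x < 8 → f x < 8) :
    ∀ (n v : ℕ), v < 8 → iterList f v n = iterList g v n
  | 0, v, _ => rfl
  | n+1, v, hv => by
    simp only [iterList]
    rw [hfg v hv, ← hfg v hv, iterList_congr f g hfg hf n (f v) (hf v hv)]

theorem vpermN_lt (c k : ℕ) : vpermN c k < 4 := by
  unfold vpermN
  split_ifs <;> omega

theorem colN_lt (c x : ℕ) (hx : x < 8) : colN c x < 8 := by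
  have := vpermN_lt c (x % 4)
  unfold colN
  omega

theorem colN_div (c x : ℕ) : colN c x / 4 = x / 4 := by
  have := vpermN_lt c (x % 4)
  unfold colN
  omega

theorem vpermN_invol (c k : ℕ) (hk : k < 4) : vpermN c (vpermN c k) = k := by
  unfold vpermN
  by_cases h0 : c = 0 <;> by_cases h1 : c = 1 <;> interval_cases k <;> simp [h0, h1]

theorem colN_invol (c x : ℕ) : colN c (colN c x) = x := by
  have h1 := vpermN_lt c (x % 4)
  have h2 : colN c x % 4 = vpermN c (x % 4) := by unfold colN; omega
  have h3 : colN c x / 4 = x / 4 := colN_div c x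
  show 4 * (colN c x / 4) + vpermN c (colN c x % 4) = x
  rw [h2, h3, vpermN_invol c _ (by omega)]
  omega

theorem minOrbitN_congr (q q' : ℕ → ℕ) (c : ℕ) (h : ∀ x, x < 8 → q x = q' x)
    (h8 : ∀ x, x < 8 → q x < 8) (v : ℕ) (hv : v < 8) :
    minOrbitN q (colN c) v = minOrbitN q' (colN c) v := by
  have hqc : ∀ x, x < 8 → (q ∘ colN c) x = (q' ∘ colN c) x :=
    fun x hx => h _ (colN_lt c x hx)
  have hqc8 : ∀ x, x < 8 → (q ∘ colN c) x < 8 :=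
    fun x hx => h8 _ (colN_lt c x hx)
  unfold minOrbitN orbitLN
  rw [iterList_congr _ _ hqc hqc8 8 v hv, h v hv,
    iterList_congr _ _ hqc hqc8 8 (q' v) (h v hv ▸ h8 v hv)]

theorem faceSumN_congr (q q' : ℕ → ℕ) (h : ∀ x, x < 8 → q x = q' x)
    (h8 : ∀ x, x < 8 → q x < 8) : faceSumN q = faceSumN q' := by
  have hface : ∀ c, faceN q c = faceN q' c := by
    intro c
    unfold faceN
    have hmap : univN.map (fun v => minOrbitN q (colN c) v) =
        univN.map (fun v => minOrbitN q' (colN c) v) := by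
      apply List.map_congr_left
      intro v hvmem
      exact minOrbitN_congr q q' c h h8 v ((mem_univN v).1 hvmem)
    rw [hmap]
  unfold faceSumN
  rw [hface 0, hface 1, hface 2]

/-! #### Encoding the vertex set in `ℕ` -/

def encX (x : Fin 2 × Fin 4) : ℕ := 4 * x.1.val + x.2.val

def decN (n : ℕ) : Fin 2 × Fin 4 :=
  (⟨n / 4 % 2, Nat.mod_lt _ (by norm_num)⟩, ⟨n % 4, Nat.mod_lt _ (by norm_num)⟩)

theorem dec_enc : ∀ x : Fin 2 × Fin 4, decN (encX x) = x := by decide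

theorem enc_lt : ∀ x : Fin 2 × Fin 4, encX x < 8 := by decide

theorem enc_dec : ∀ n : ℕ, n < 8 → encX (decN n) = n := by
  intro n hn
  interval_cases n <;> decide

theorem enc_inj : Function.Injective encX := fun x y h => by
  rw [← dec_enc x, ← dec_enc y, h]

theorem enc_col : ∀ (c : Fin 3) (x : Fin 2 × Fin 4),
    encX (G2.colPerm c x) = colN c.val (encX x) := by decide

theorem dec_col : ∀ (c : Fin 3) (n : ℕ), n < 8 →
    decN (colN c.val n) = G2.colPerm c (decN n) := by
  intro c n hn
  fin_cases c <;> interval_cases n <;> rfl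

theorem dec_p2 : ∀ n : ℕ, n < 8 → decN (p2N n) = G2.pairing (decN n) := by
  intro n hn
  interval_cases n <;> rfl

theorem enc_p2 : ∀ n : ℕ, n < 8 → encX (G2.pairing (decN n)) = p2N n := by
  intro n hn
  interval_cases n <;> decide

theorem p2N_lt : ∀ n : ℕ, n < 8 → p2N n < 8 := by
  intro n hn
  unfold p2N
  split_ifs <;> omega

theorem bubblePerm_invol : ∀ (c : Fin 3) (k : Fin 4), bubblePerm c (bubblePerm c k) = k := by
  decide

theorem colPerm_invol (G : TGraph) (c : Fin 3) (v : G.V) :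
    G.colPerm c (G.colPerm c v) = v := by
  cases v with
  | mk i k =>
    simp only [TGraph.colPerm, Equiv.prodCongr_apply, Equiv.refl_apply, Prod.map]
    rw [bubblePerm_invol]

/-! #### The bridge between a graph and its `ℕ`-encoded pairing -/

section Bridge

variable (G : TGraph) (φ : G.V ≃ (Fin 2 × Fin 4))
  (hφ : ∀ (c : Fin 3) (v : G.V), φ (G.colPerm c v) = G2.colPerm c (φ v))

def eV : G.V → ℕ := fun v => encX (φ v)

def qN : ℕ → ℕ := fun n => if n < 8 then encX (φ (G.pairing (φ.symm (decN n)))) else n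

theorem eV_lt (v : G.V) : eV G φ v < 8 := enc_lt _

theorem eV_inj : Function.Injective (eV G φ) := fun u v h =>
  φ.injective (enc_inj h)

theorem eV_surj : ∀ n : ℕ, n < 8 → ∃ v, eV G φ v = n := by
  intro n hn
  exact ⟨φ.symm (decN n), by simp [eV, enc_dec n hn]⟩

theorem qN_eV (v : G.V) : qN G φ (eV G φ v) = eV G φ (G.pairing v) := by
  simp only [qN, eV, enc_lt, if_pos, dec_enc, Equiv.symm_apply_apply]

theorem qN_lt (n : ℕ) (hn : n < 8) : qN G φ n < 8 := by
  simp only [qN, if_pos hn]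
  exact enc_lt _

theorem qN_def (n : ℕ) (hn : n < 8) :
    qN G φ n = encX (φ (G.pairing (φ.symm (decN n)))) := by
  simp only [qN, if_pos hn]

theorem qN_invol (n : ℕ) : qN G φ (qN G φ n) = n := by
  by_cases hn : n < 8
  · rw [qN_def G φ n hn, qN_def G φ _ (enc_lt _), dec_enc, Equiv.symm_apply_apply,
      G.invol, Equiv.apply_symm_apply, enc_dec n hn]
  · simp only [qN, if_neg hn]

theorem qN_fixfree (n : ℕ) (hn : n < 8) : qN G φ n ≠ n := by
  simp only [qN, if_pos hn]
  intro h
  have h2 : φ (G.pairing (φ.symm (decN n))) = decN n := by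
    have := congrArg decN h
    rwa [dec_enc] at this
  apply G.fixfree (φ.symm (decN n))
  have h3 := congrArg φ.symm h2
  rwa [Equiv.symm_apply_apply] at h3

/-- Connectivity is equivalent to the existence of a color-0 edge joining
the two bubbles. -/
theorem rtg_iff_cross (q : ℕ → ℕ) (hq8 : ∀ x, x < 8 → q x < 8)
    (hqinv : ∀ x, q (q x) = x) :
    (∀ u w : ℕ, u < 8 → w < 8 →
      ReflTransGen (fun x y => y = q x ∨ y = colN 0 x ∨ y = colN 1 x ∨ y = colN 2 x) u w) ↔
    (∃ v, v < 8 ∧ q v / 4 ≠ v / 4) := by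
  constructor
  · intro h
    by_contra hnc
    push_neg at hnc
    have hinv : ∀ x y : ℕ,
        (y = q x ∨ y = colN 0 x ∨ y = colN 1 x ∨ y = colN 2 x) →
        (x < 8 ∧ x / 4 = 0) → (y < 8 ∧ y / 4 = 0) := by
      rintro x y (rfl | rfl | rfl | rfl) ⟨hx8, hx0⟩
      · exact ⟨hq8 x hx8, by rw [hnc x hx8, hx0]⟩
      · exact ⟨colN_lt 0 x hx8, by rw [colN_div, hx0]⟩
      · exact ⟨colN_lt 1 x hx8, by rw [colN_div, hx0]⟩
      · exact ⟨colN_lt 2 x hx8, by rw [colN_div, hx0]⟩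
    have h04 := h 0 4 (by omega) (by omega)
    have hP : ∀ z : ℕ, ReflTransGen
        (fun x y => y = q x ∨ y = colN 0 x ∨ y = colN 1 x ∨ y = colN 2 x) 0 z →
        (z < 8 ∧ z / 4 = 0) := by
      intro z hz
      induction hz with
      | refl => exact ⟨by omega, by omega⟩
      | tail _ hstep ih => exact hinv _ _ hstep ih
    have := (hP 4 h04).2
    omega
  · rintro ⟨v0, hv0, hcross⟩ u w hu hw
    have hsame : ∀ x y : ℕ, x < 8 → y < 8 → x / 4 = y / 4 →
        ReflTransGen (fun x y => y = q x ∨ y = colN 0 x ∨ y = colN 1 x ∨ y = colN 2 x) x y := by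
      intro x y hx hy hxy
      have hkey : ∀ x' ∈ univN, ∀ y' ∈ univN, x' / 4 ≠ y' / 4 ∨ x' = y' ∨
          colN 0 x' = y' ∨ colN 1 x' = y' ∨ colN 2 x' = y' := by decide
      rcases hkey x ((mem_univN x).2 hx) y ((mem_univN y).2 hy) with h | h | h | h | h
      · exact absurd hxy h
      · exact h ▸ ReflTransGen.refl
      · exact ReflTransGen.single (Or.inr (Or.inl h.symm))
      · exact ReflTransGen.single (Or.inr (Or.inr (Or.inl h.symm)))
      · exact ReflTransGen.single (Or.inr (Or.inr (Or.inr h.symm)))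
    have hqv0 : q v0 < 8 := hq8 v0 hv0
    by_cases hb : u / 4 = w / 4
    · exact hsame u w hu hw hb
    · by_cases hb2 : v0 / 4 = u / 4
      · have h1 : ReflTransGen (fun x y => y = q x ∨ y = colN 0 x ∨ y = colN 1 x ∨ y = colN 2 x)
            u v0 := hsame u v0 hu hv0 hb2.symm
        have h2 : ReflTransGen (fun x y => y = q x ∨ y = colN 0 x ∨ y = colN 1 x ∨ y = colN 2 x)
            v0 (q v0) := ReflTransGen.single (Or.inl rfl)
        have h3 : q v0 / 4 = w / 4 := by omega
        exact (h1.trans h2).trans (hsame (q v0) w hqv0 hw h3)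
      · have hqu : q v0 / 4 = u / 4 := by omega
        have h1 : ReflTransGen (fun x y => y = q x ∨ y = colN 0 x ∨ y = colN 1 x ∨ y = colN 2 x)
            u (q v0) := hsame u (q v0) hu hqv0 hqu.symm
        have h2 : ReflTransGen (fun x y => y = q x ∨ y = colN 0 x ∨ y = colN 1 x ∨ y = colN 2 x)
            (q v0) v0 := ReflTransGen.single (Or.inl (hqinv v0).symm)
        have h3 : v0 / 4 = w / 4 := by omega
        exact (h1.trans h2).trans (hsame v0 w hv0 hw h3)

include hφ

theorem eV_col (c : Fin 3) (v : G.V) :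
    eV G φ (G.colPerm c v) = colN c.val (eV G φ v) := by
  simp only [eV]
  rw [hφ c v, enc_col]

/-- Transport of the connectivity relation. -/
theorem connected_iff_rtg :
    G.Connected ↔ ∀ u w : ℕ, u < 8 → w < 8 →
      ReflTransGen (fun x y => y = qN G φ x ∨ y = colN 0 x ∨ y = colN 1 x ∨ y = colN 2 x) u w := by
  have hS : ∀ f ∈ ({G.pairing} ∪ Set.range G.colPerm : Set (Equiv.Perm G.V)),
      ∀ x, f (f x) = x := by
    rintro f (rfl | ⟨c, rfl⟩)
    · exact G.invol
    · exact colPerm_invol G c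
  have hstep : ∀ a b : G.V,
      (∃ f ∈ ({G.pairing} ∪ Set.range G.colPerm : Set (Equiv.Perm G.V)), b = f a) ↔
      ((fun x y => y = qN G φ x ∨ y = colN 0 x ∨ y = colN 1 x ∨ y = colN 2 x)
        (eV G φ a) (eV G φ b)) := by
    intro a b
    constructor
    · rintro ⟨f, (rfl | ⟨c, rfl⟩), rfl⟩
      · exact Or.inl (qN_eV G φ a).symm
      · rw [eV_col G φ hφ c a]
        fin_cases c
        · exact Or.inr (Or.inl rfl)
        · exact Or.inr (Or.inr (Or.inl rfl))
        · exact Or.inr (Or.inr (Or.inr rfl))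
    · rintro (h | h | h | h)
      · refine ⟨G.pairing, Or.inl rfl, eV_inj G φ ?_⟩
        rw [h, qN_eV]
      · exact ⟨G.colPerm 0, Or.inr ⟨0, rfl⟩, eV_inj G φ (by rw [h, eV_col G φ hφ 0 a]; rfl)⟩
      · exact ⟨G.colPerm 1, Or.inr ⟨1, rfl⟩, eV_inj G φ (by rw [h, eV_col G φ hφ 1 a]; rfl)⟩
      · exact ⟨G.colPerm 2, Or.inr ⟨2, rfl⟩, eV_inj G φ (by rw [h, eV_col G φ hφ 2 a]; rfl)⟩
  have himg : ∀ (a : G.V) (y : ℕ),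
      (y = qN G φ (eV G φ a) ∨ y = colN 0 (eV G φ a) ∨ y = colN 1 (eV G φ a) ∨
        y = colN 2 (eV G φ a)) → ∃ b, y = eV G φ b := by
    rintro a y (rfl | rfl | rfl | rfl)
    · exact ⟨G.pairing a, qN_eV G φ a⟩
    · exact ⟨G.colPerm 0 a, (eV_col G φ hφ 0 a).symm⟩
    · exact ⟨G.colPerm 1 a, (eV_col G φ hφ 1 a).symm⟩
    · exact ⟨G.colPerm 2 a, (eV_col G φ hφ 2 a).symm⟩
  constructor
  · intro hconn u w hu hw
    obtain ⟨x, rfl⟩ := eV_surj G φ u hu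
    obtain ⟨y, rfl⟩ := eV_surj G φ w hw
    have h1 : y ∈ MulAction.orbit G.fullGroup x := hconn y x
    rw [TGraph.fullGroup] at h1
    have h2 := (orbit_closure_iff_rtg _ hS x y).1 h1
    exact (rtg_map_inj (eV G φ) (eV_inj G φ) (fun a b => ∃ f ∈ ({G.pairing} ∪ Set.range G.colPerm : Set (Equiv.Perm G.V)), b = f a) (fun x y => y = qN G φ x ∨ y = colN 0 x ∨ y = colN 1 x ∨ y = colN 2 x) hstep himg x y).1 h2
  · intro h u v
    rw [TGraph.fullGroup]
    rw [orbit_closure_iff_rtg _ hS v u]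
    rw [rtg_map_inj (eV G φ) (eV_inj G φ) (fun a b => ∃ f ∈ ({G.pairing} ∪ Set.range G.colPerm : Set (Equiv.Perm G.V)), b = f a) (fun x y => y = qN G φ x ∨ y = colN 0 x ∨ y = colN 1 x ∨ y = colN 2 x) hstep himg v u]
    exact h _ _ (eV_lt G φ v) (eV_lt G φ u)

/-- Transport of the face count. -/
theorem numFaces_eq (c : Fin 3) : G.numFaces c = faceN (qN G φ) c.val := by
  classical
  have hS : ∀ f ∈ ({G.pairing, G.colPerm c} : Set (Equiv.Perm G.V)), ∀ x, f (f x) = x := by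
    rintro f (rfl | rfl)
    · exact G.invol
    · exact colPerm_invol G c
  have hstep : ∀ a b : G.V,
      (∃ f ∈ ({G.pairing, G.colPerm c} : Set (Equiv.Perm G.V)), b = f a) ↔
      ((fun x y => y = qN G φ x ∨ y = colN c.val x) (eV G φ a) (eV G φ b)) := by
    intro a b
    constructor
    · rintro ⟨f, (rfl | rfl), rfl⟩
      · exact Or.inl (qN_eV G φ a).symm
      · exact Or.inr (eV_col G φ hφ c a)
    · rintro (h | h)
      · exact ⟨G.pairing, Or.inl rfl, eV_inj G φ (by rw [h, qN_eV])⟩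
      · exact ⟨G.colPerm c, Or.inr rfl, eV_inj G φ (by rw [h, eV_col G φ hφ c a])⟩
  have himg : ∀ (a : G.V) (y : ℕ),
      (y = qN G φ (eV G φ a) ∨ y = colN c.val (eV G φ a)) → ∃ b, y = eV G φ b := by
    rintro a y (rfl | rfl)
    · exact ⟨G.pairing a, qN_eV G φ a⟩
    · exact ⟨G.colPerm c a, (eV_col G φ hφ c a).symm⟩
  have hcol8 : ∀ x, x < 8 → colN c.val x < 8 := fun x hx => colN_lt c.val x hx
  have hq8 : ∀ x, x < 8 → qN G φ x < 8 := fun x hx => qN_lt G φ x hx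
  have hqinv : ∀ x, qN G φ (qN G φ x) = x := qN_invol G φ
  have hcolinv : ∀ x, colN c.val (colN c.val x) = x := colN_invol c.val
  have hsep : ∀ u v : G.V,
      minOrbitN (qN G φ) (colN c.val) (eV G φ u) =
        minOrbitN (qN G φ) (colN c.val) (eV G φ v) ↔
      (MulAction.orbitRel (G.faceGroup c) G.V).r u v := by
    intro u v
    have h1 : (MulAction.orbitRel (G.faceGroup c) G.V).r u v ↔
        u ∈ MulAction.orbit (G.faceGroup c) v := Iff.rfl
    rw [h1, TGraph.faceGroup, orbit_closure_iff_rtg _ hS v u,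
      rtg_map_inj (eV G φ) (eV_inj G φ)
        (fun a b => ∃ f ∈ ({G.pairing, G.colPerm c} : Set (Equiv.Perm G.V)), b = f a)
        (fun x y => y = qN G φ x ∨ y = colN c.val x) hstep himg v u,
      minOrbitN_eq_iff (qN G φ) (colN c.val) hqinv hcolinv hq8 hcol8
        (eV G φ u) (eV G φ v) (eV_lt G φ u) (eV_lt G φ v)]
    have hsymm : Symmetric (fun x w : ℕ => w = qN G φ x ∨ w = colN c.val x) := by
      rintro x w (rfl | rfl)
      · exact Or.inl (hqinv x).symm
      · exact Or.inr (hcolinv x).symm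
    exact ⟨fun h => rtg_symm_of hsymm h, fun h => rtg_symm_of hsymm h⟩
  have hcount := natCard_quotient (MulAction.orbitRel (G.faceGroup c) G.V)
    (fun v => minOrbitN (qN G φ) (colN c.val) (eV G φ v)) (fun u v => hsep u v)
  have h2 : G.numFaces c =
      (Finset.univ.image (fun v => minOrbitN (qN G φ) (colN c.val) (eV G φ v))).card := by
    rw [TGraph.numFaces]
    exact hcount
  rw [h2]
  have h3 : (Finset.univ.image (fun v => minOrbitN (qN G φ) (colN c.val) (eV G φ v))) =
      (univN.map (fun n => minOrbitN (qN G φ) (colN c.val) n)).toFinset := by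
    ext n
    simp only [Finset.mem_image, Finset.mem_univ, true_and, List.mem_toFinset, List.mem_map]
    constructor
    · rintro ⟨v, rfl⟩
      exact ⟨eV G φ v, (mem_univN _).2 (eV_lt G φ v), rfl⟩
    · rintro ⟨m, hm, rfl⟩
      obtain ⟨v, rfl⟩ := eV_surj G φ m ((mem_univN m).1 hm)
      exact ⟨v, rfl⟩
  rw [h3, List.card_toFinset]
  rfl

theorem F_eq : G.F = faceSumN (qN G φ) := by
  rw [TGraph.F, Fin.sum_univ_three, numFaces_eq G φ hφ 0, numFaces_eq G φ hφ 1,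
    numFaces_eq G φ hφ 2]
  rfl

/-- Building an isomorphism with `G2` out of a successful candidate check. -/
theorem iso_of_isoN (h : isoN (qN G φ)) : IsIso G G2 := by
  obtain ⟨ψ, hmem, hψ⟩ := h
  have hcand : ∀ ψ' ∈ candListN,
      (∀ x ∈ univN, ψ' x ∈ univN) ∧
      (∀ x ∈ univN, ∀ y ∈ univN, ψ' x = ψ' y → x = y) ∧
      (∀ (c : Fin 3), ∀ x ∈ univN, ψ' (colN c.val x) = colN c.val (ψ' x)) := by decide
  obtain ⟨hψ8, hψinj, hψcol⟩ := hcand ψ hmem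
  set Ψ : (Fin 2 × Fin 4) → (Fin 2 × Fin 4) := fun x => decN (ψ (encX x)) with hΨdef
  have hΨinj : Function.Injective Ψ := by
    intro x y hxy
    have hx8 : encX x ∈ univN := (mem_univN _).2 (enc_lt x)
    have hy8 : encX y ∈ univN := (mem_univN _).2 (enc_lt y)
    have h1 : encX (decN (ψ (encX x))) = encX (decN (ψ (encX y))) := congrArg encX hxy
    rw [enc_dec _ ((mem_univN _).1 (hψ8 _ hx8)), enc_dec _ ((mem_univN _).1 (hψ8 _ hy8))] at h1
    exact enc_inj (hψinj _ hx8 _ hy8 h1)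
  have hΨbij : Function.Bijective Ψ := Finite.injective_iff_bijective.1 hΨinj
  refine ⟨⟨φ.trans (Equiv.ofBijective Ψ hΨbij), ?_, ?_⟩⟩
  · intro v
    show Ψ (φ (G.pairing v)) = G2.pairing (Ψ (φ v))
    have h1 : encX (φ (G.pairing v)) = qN G φ (eV G φ v) := (qN_eV G φ v).symm
    have h2 : eV G φ v ∈ univN := (mem_univN _).2 (eV_lt G φ v)
    have h3 : ψ (eV G φ v) ∈ univN := hψ8 _ h2
    calc Ψ (φ (G.pairing v)) = decN (ψ (qN G φ (eV G φ v))) := by rw [hΨdef]; simp only []; rw [h1]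
    _ = decN (p2N (ψ (eV G φ v))) := by rw [hψ _ h2]
    _ = (show Fin 2 × Fin 4 from G2.pairing (decN (ψ (eV G φ v)))) := dec_p2 _ ((mem_univN _).1 h3)
    _ = (show Fin 2 × Fin 4 from G2.pairing (Ψ (φ v))) := rfl
  · intro c v
    show Ψ (φ (G.colPerm c v)) = G2.colPerm c (Ψ (φ v))
    have h1 : encX (φ (G.colPerm c v)) = colN c.val (eV G φ v) := eV_col G φ hφ c v
    have h2 : eV G φ v ∈ univN := (mem_univN _).2 (eV_lt G φ v)
    have h3 : ψ (eV G φ v) ∈ univN := hψ8 _ h2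
    calc Ψ (φ (G.colPerm c v)) = decN (ψ (colN c.val (eV G φ v))) := by
          rw [hΨdef]; simp only []; rw [h1]
    _ = decN (colN c.val (ψ (eV G φ v))) := by rw [hψcol c _ h2]
    _ = (show Fin 2 × Fin 4 from G2.colPerm c (decN (ψ (eV G φ v)))) := dec_col c _ ((mem_univN _).1 h3)
    _ = (show Fin 2 × Fin 4 from G2.colPerm c (Ψ (φ v))) := rfl

end Bridge

/-! #### Facts about `G2` -/

def phiG2 : G2.V ≃ (Fin 2 × Fin 4) := Equiv.refl _

theorem hphiG2 : ∀ (c : Fin 3) (v : G2.V), phiG2 (G2.colPerm c v) = G2.colPerm c (phiG2 v) :=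
  fun _ _ => rfl

theorem qN_G2_agree : ∀ n : ℕ, n < 8 → qN G2 phiG2 n = p2N n := by
  intro n hn
  simp only [qN, if_pos hn, phiG2, Equiv.refl_apply, Equiv.refl_symm]
  exact enc_p2 n hn

theorem faceSumN_p2N : faceSumN p2N = 6 := by decide

theorem G2_F : G2.F = 6 := by
  rw [F_eq G2 phiG2 hphiG2,
    faceSumN_congr (qN G2 phiG2) p2N qN_G2_agree (fun x hx => qN_lt G2 phiG2 x hx)]
  exact faceSumN_p2N

theorem G2_b : G2.b = 2 := by
  simp [TGraph.b, G2]
  rfl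

theorem G2_connected : G2.Connected := by
  rw [connected_iff_rtg G2 phiG2 hphiG2]
  rw [rtg_iff_cross (qN G2 phiG2) (fun x hx => qN_lt G2 phiG2 x hx) (qN_invol G2 phiG2)]
  refine ⟨0, by omega, ?_⟩
  rw [qN_G2_agree 0 (by omega)]
  decide

/-! #### The bound and the uniqueness for arbitrary connected graphs -/

theorem main_bound (G : TGraph) (φ : G.V ≃ (Fin 2 × Fin 4))
    (hφ : ∀ (c : Fin 3) (v : G.V), φ (G.colPerm c v) = G2.colPerm c (φ v))
    (hconn : G.Connected) :
    G.F ≤ 6 ∧ (G.F = 6 → IsIso G G2) := by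
  -- find the matching representing `qN G φ`
  obtain ⟨m, hm, hmq⟩ := invols_complete (qN G φ) (qN_invol G φ) 8 univN
    (by decide) (by decide)
    (fun x hx => (mem_univN _).2 (qN_lt G φ x ((mem_univN x).1 hx)))
    (fun x hx => qN_fixfree G φ x ((mem_univN x).1 hx))
  have hagree : ∀ x, x < 8 → mfunN m x = qN G φ x :=
    fun x hx => hmq x ((mem_univN x).2 hx)
  have hq8 : ∀ x, x < 8 → qN G φ x < 8 := fun x hx => qN_lt G φ x hx
  have hm8 : ∀ x, x < 8 → mfunN m x < 8 := fun x hx => hagree x hx ▸ hq8 x hx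
  -- connectivity gives the crossing condition
  have hcrossq : ∃ v, v < 8 ∧ qN G φ v / 4 ≠ v / 4 := by
    rw [← rtg_iff_cross (qN G φ) hq8 (qN_invol G φ)]
    exact (connected_iff_rtg G φ hφ).1 hconn
  have hcross : crossN (mfunN m) := by
    obtain ⟨v, hv, hc⟩ := hcrossq
    exact ⟨v, (mem_univN v).2 hv, by rw [hagree v hv]; exact hc⟩
  have hFq : G.F = faceSumN (mfunN m) := by
    rw [F_eq G φ hφ]
    exact (faceSumN_congr (mfunN m) (qN G φ) hagree hm8).symm
  obtain ⟨hle, hiso⟩ := mainEnumN m hm hcross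
  constructor
  · rw [hFq]; exact hle
  · intro hF6
    have hisoN : isoN (mfunN m) := hiso (by rw [← hFq]; exact hF6)
    apply iso_of_isoN G φ hφ
    obtain ⟨ψ, hmem, hψ⟩ := hisoN
    refine ⟨ψ, hmem, fun v hv => ?_⟩
    rw [← hagree v ((mem_univN v).1 hv)]
    exact hψ v hv

/-- Standard choice of `φ` for a graph with two bubbles. -/
theorem exists_phi (G : TGraph) (hb : G.b = 2) :
    ∃ φ : G.V ≃ (Fin 2 × Fin 4),
      ∀ (c : Fin 3) (v : G.V), φ (G.colPerm c v) = G2.colPerm c (φ v) := by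
  have e : G.B ≃ Fin 2 := Fintype.equivFinOfCardEq hb
  refine ⟨e.prodCongr (Equiv.refl (Fin 4)), fun c v => rfl⟩

theorem F_of_iso (G : TGraph) (h : IsIso G G2) : G.F = 6 := by
  obtain ⟨i⟩ := h
  have hq : ∀ n, n < 8 → qN G i.toEquiv n = p2N n := by
    intro n hn
    have h1 := i.map_pairing (i.toEquiv.symm (decN n))
    erw [Equiv.apply_symm_apply] at h1
    exact (qN_def G i.toEquiv n hn).trans ((congrArg encX h1).trans (enc_p2 n hn))
  rw [F_eq G i.toEquiv i.map_col,
    faceSumN_congr (qN G i.toEquiv) p2N hq (fun x hx => qN_lt G i.toEquiv x hx)]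
  exact faceSumN_p2N

end G2Max

/-- The unique connected graph of the tetrahedral model with
two bubbles maximizing the number of faces is `G_2` (up to color-preserving
isomorphism), and `F(G_2) = 6`. -/
theorem G2_unique_maximizer :
    G2.F = 6 ∧
      ∀ G : TGraph, G.Connected → G.b = 2 →
        (G.MaximizesFaces ↔ IsIso G G2) := by
  refine ⟨G2Max.G2_F, ?_⟩
  intro G hconn hb
  obtain ⟨φ, hφ⟩ := G2Max.exists_phi G hb
  obtain ⟨hle, hiso⟩ := G2Max.main_bound G φ hφ hconn
  constructor
  · intro hmax
    have h1 : G2.F ≤ G.F := hmax.2 G2 G2Max.G2_connected (G2Max.G2_b.trans hb.symm)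
    rw [G2Max.G2_F] at h1
    exact hiso (le_antisymm hle h1)
  · intro hisoG
    refine ⟨hconn, ?_⟩
    intro H hHconn hHb
    rw [hb] at hHb
    obtain ⟨φH, hφH⟩ := G2Max.exists_phi H hHb
    have hH := (G2Max.main_bound H φH hφH hHconn).1
    rw [G2Max.F_of_iso G hisoG]
    exact hH
end

section
/- Every connected graph of the tetrahedral model with exactly one bubble is one of the three double tadpoles G_1^{(1)}, G_1^{(2)}, G_1^{(3)}, and each has exactly 4 faces: two faces of its defining color c and one face of each other color. -/
/-!  A combinatorial model of the Feynman graphs of the rank-3 tetrahedral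
(`O(N)^3`) tensor model.

A graph consists of a finite set `B` of bubbles (copies of the tetrahedron
`K_4`); each bubble has four vertices, so the vertex set is `B × Fin 4`.
Inside every bubble the edges of colors `1,2,3` are given once and for all by
the three fixed-point-free involutions of `Fin 4` (the proper 3-edge-coloring
of `K_4`).  The color-0 propagator edges, one per vertex, are encoded by a
fixed-point-free involution `pairing` of the vertex set. -/

open Equiv

open TGraph

open TGraph

set_option maxRecDepth 10000 in
private lemma fpf_invol_fin4 : ∀ f : Fin 4 → Fin 4, (∀ k, f (f k) = k) →
    (∀ k, f k ≠ k) → ∃ c : Fin 3, ∀ k, f k = bubblePerm c k := by decide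

instance (c : Fin 3) : Subsingleton (G1 c).B := inferInstanceAs (Subsingleton (Fin 1))

private lemma part1 (G : TGraph) (hb : G.b = 1) : ∃ c, IsIso G (G1 c) := by
  have hsub : Subsingleton G.B := by
    have := Fintype.card_le_one_iff_subsingleton.mp (le_of_eq hb)
    exact this
  have hne : Nonempty G.B := Fintype.card_pos_iff.mp (by rw [TGraph.b] at hb; omega)
  obtain ⟨b0⟩ := hne
  set f : Fin 4 → Fin 4 := fun k => (G.pairing (b0, k)).2 with hf
  have hpair : ∀ (b : G.B) (k : Fin 4), G.pairing (b, k) = (b0, f k) := by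
    intro b k
    have hb' : b = b0 := Subsingleton.elim _ _
    subst hb'
    exact Prod.ext (Subsingleton.elim _ _) rfl
  have hinv : ∀ k, f (f k) = k := by
    intro k
    have : G.pairing (b0, f k) = (b0, k) := by
      rw [← hpair b0 k]; exact G.invol _
    have := congrArg Prod.snd this
    simpa [hf] using this
  have hff : ∀ k, f k ≠ k := by
    intro k h
    exact G.fixfree (b0, k) (by rw [hpair]; exact Prod.ext (Subsingleton.elim _ _) h)
  obtain ⟨c, hc⟩ := fpf_invol_fin4 f hinv hff
  refine ⟨c, ⟨⟨(Fintype.equivFinOfCardEq hb).prodCongr (Equiv.refl _), ?_, ?_⟩⟩⟩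
  · rintro ⟨b, k⟩
    rw [hpair b k]
    exact Prod.ext (Subsingleton.elim _ _) (hc k)
  · rintro d ⟨b, k⟩
    rfl

/-- Elements of the subgroup generated by an involution. -/
private lemma mem_closure_invol {α : Type*} [Group α] {p : α} (hp : p * p = 1)
    {g : α} (hg : g ∈ Subgroup.closure {p}) : g = 1 ∨ g = p := by
  induction hg using Subgroup.closure_induction with
  | mem x hx => exact Or.inr (by simpa using hx)
  | one => exact Or.inl rfl
  | mul x y hx hy ihx ihy =>
      rcases ihx with rfl | rfl <;> rcases ihy with rfl | rfl <;> simp [hp]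
  | inv x hx ih =>
      rcases ih with rfl | rfl
      · simp
      · right
        rw [inv_eq_iff_mul_eq_one, hp]

private lemma G1_pairing (c : Fin 3) : (G1 c).pairing = (G1 c).colPerm c := rfl

private lemma colPerm_sq (c : Fin 3) :
    (G1 c).colPerm c * (G1 c).colPerm c = 1 := by
  have h4 : ∀ j : Fin 4, bubblePerm c (bubblePerm c j) = j := by fin_cases c <;> decide
  apply Equiv.ext
  rintro ⟨b, k⟩
  show (G1 c).colPerm c ((G1 c).colPerm c (b, k)) = (b, k)
  simp [TGraph.colPerm, Equiv.prodCongr_apply, h4]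

private lemma orbit_G1_self {c : Fin 3} {u v : (G1 c).V}
    (h : (MulAction.orbitRel ((G1 c).faceGroup c) (G1 c).V).r u v) :
    u = v ∨ u = (G1 c).colPerm c v := by
  obtain ⟨⟨g, hg⟩, hgv⟩ := h
  have hset : ({(G1 c).pairing, (G1 c).colPerm c} : Set (Equiv.Perm (G1 c).V)) =
      {(G1 c).colPerm c} := by rw [G1_pairing]; exact Set.pair_eq_singleton _
  rw [TGraph.faceGroup, hset] at hg
  rcases mem_closure_invol (colPerm_sq c) hg with rfl | rfl
  · left; exact hgv.symm
  · right; exact hgv.symm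

private lemma phi_aux : ∀ (c : Fin 3) (k l : Fin 4),
    ((if (k = 0 ∨ k = bubblePerm c 0) then (0 : Fin 2) else 1) =
      (if (l = 0 ∨ l = bubblePerm c 0) then (0 : Fin 2) else 1)) →
    k = l ∨ k = bubblePerm c l := by decide

private lemma numFaces_self (c : Fin 3) : (G1 c).numFaces c = 2 := by
  set φ : (G1 c).V → Fin 2 :=
    fun v => if (v.2 = 0 ∨ v.2 = bubblePerm c 0) then 0 else 1 with hφ
  have hconst : ∀ u v : (G1 c).V,
      (MulAction.orbitRel ((G1 c).faceGroup c) (G1 c).V).r u v → φ u = φ v := by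
    intro u v h
    rcases orbit_G1_self h with rfl | rfl
    · rfl
    · obtain ⟨b, k⟩ := v
      have : ∀ j : Fin 4,
          ((if (bubblePerm c j = 0 ∨ bubblePerm c j = bubblePerm c 0) then (0 : Fin 2) else 1) =
            (if (j = 0 ∨ j = bubblePerm c 0) then (0 : Fin 2) else 1)) := by
        fin_cases c <;> decide
      simpa [hφ, TGraph.colPerm, Equiv.prodCongr_apply] using this k
  set Φ : MulAction.orbitRel.Quotient ((G1 c).faceGroup c) (G1 c).V → Fin 2 :=
    Quotient.lift φ hconst with hΦ
  have hbij : Function.Bijective Φ := by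
    constructor
    · intro a b
      induction a using Quotient.ind
      induction b using Quotient.ind
      rename_i u v
      intro h
      have h' : φ u = φ v := h
      apply Quotient.sound
      obtain ⟨bu, ku⟩ := u; obtain ⟨bv, kv⟩ := v
      rcases phi_aux c ku kv h' with h2 | h2
      · have : (bu, ku) = (bv, kv) := Prod.ext (Subsingleton.elim _ _) h2
        rw [this]
      · refine ⟨⟨(G1 c).colPerm c, Subgroup.subset_closure (by simp)⟩, ?_⟩
        show (G1 c).colPerm c (bv, kv) = (bu, ku)
        exact Prod.ext (Subsingleton.elim _ _) h2.symm
    · intro y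
      have : ∀ y : Fin 2, ∃ k : Fin 4,
          (if (k = 0 ∨ k = bubblePerm c 0) then (0 : Fin 2) else 1) = y := by
        fin_cases c <;> decide
      obtain ⟨k, hk⟩ := this y
      exact ⟨⟦((0 : Fin 1), k)⟧, hk⟩
  rw [TGraph.numFaces, Nat.card_eq_of_bijective Φ hbij, Nat.card_eq_fintype_card,
    Fintype.card_fin]

private lemma klein_aux : ∀ c c' : Fin 3, c' ≠ c → ∀ k l : Fin 4,
    l = k ∨ l = bubblePerm c k ∨ l = bubblePerm c' k ∨
      l = bubblePerm c (bubblePerm c' k) := by decide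

private lemma numFaces_other (c c' : Fin 3) (h : c' ≠ c) : (G1 c).numFaces c' = 1 := by
  rw [TGraph.numFaces, Nat.card_eq_one_iff_unique]
  constructor
  · constructor
    intro a b
    induction a using Quotient.ind
    induction b using Quotient.ind
    rename_i u v
    apply Quotient.sound
    have ha : (G1 c).colPerm c ∈ (G1 c).faceGroup c' :=
      Subgroup.subset_closure (by rw [← G1_pairing]; simp)
    have hb : (G1 c).colPerm c' ∈ (G1 c).faceGroup c' :=
      Subgroup.subset_closure (by simp)
    obtain ⟨bu, ku⟩ := u; obtain ⟨bv, kv⟩ := v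
    rcases klein_aux c c' h kv ku with h2 | h2 | h2 | h2
    · refine ⟨⟨1, one_mem _⟩, ?_⟩
      show ((bv, kv) : (G1 c).V) = (bu, ku)
      exact Prod.ext (Subsingleton.elim _ _) h2.symm
    · refine ⟨⟨(G1 c).colPerm c, ha⟩, ?_⟩
      show (G1 c).colPerm c (bv, kv) = (bu, ku)
      exact Prod.ext (Subsingleton.elim _ _) h2.symm
    · refine ⟨⟨(G1 c).colPerm c', hb⟩, ?_⟩
      show (G1 c).colPerm c' (bv, kv) = (bu, ku)
      exact Prod.ext (Subsingleton.elim _ _) h2.symm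
    · refine ⟨⟨(G1 c).colPerm c * (G1 c).colPerm c', mul_mem ha hb⟩, ?_⟩
      show (G1 c).colPerm c ((G1 c).colPerm c' (bv, kv)) = (bu, ku)
      exact Prod.ext (Subsingleton.elim _ _) h2.symm
  · exact ⟨⟦((0 : Fin 1), (0 : Fin 4))⟧⟩

/-- Every connected graph of the tetrahedral model with exactly
one bubble is one of the three double tadpoles `G_1^{(c)}`, and each has
exactly 4 faces: two faces of its defining color `c` and one face of each
other color. -/
theorem one_bubble_classification :
    (∀ G : TGraph, G.Connected → G.b = 1 → ∃ c, IsIso G (G1 c)) ∧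
      ∀ c : Fin 3, (G1 c).numFaces c = 2 ∧
        (∀ c', c' ≠ c → (G1 c).numFaces c' = 1) ∧ (G1 c).F = 4 := by
  refine ⟨fun G _ hb => part1 G hb, fun c => ⟨numFaces_self c, fun c' h => numFaces_other c c' h, ?_⟩⟩
  rw [TGraph.F, Fin.sum_univ_three]
  fin_cases c
  · show (G1 0).numFaces 0 + (G1 0).numFaces 1 + (G1 0).numFaces 2 = 4
    rw [numFaces_self 0, numFaces_other 0 1 (by decide), numFaces_other 0 2 (by decide)]
  · show (G1 1).numFaces 0 + (G1 1).numFaces 1 + (G1 1).numFaces 2 = 4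
    rw [numFaces_self 1, numFaces_other 1 0 (by decide), numFaces_other 1 2 (by decide)]
  · show (G1 2).numFaces 0 + (G1 2).numFaces 1 + (G1 2).numFaces 2 = 4
    rw [numFaces_self 2, numFaces_other 2 0 (by decide), numFaces_other 2 1 (by decide)]
end
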